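/- arXiv:0807.2871 — 8 statements merged into one kernel-verified Lean document; each statement's English description precedes it below -/
import Mathlib

section
/- Let G ≤ Homeo₊(S¹) be such that every non-identity element of G has no fixed point on the circle. If f, g ∈ G have equal rotation numbers, then f = g. Consequently G is abelian. -/
/-- The circle `S¹ = ℝ/ℤ`. -/
abbrev S1 := AddCircle (1 : ℝ)

/-- `F : ℝ → ℝ` is a lift of `f` through the covering `ℝ → ℝ/ℤ`, witnessing that `f`
is an orientation-preserving homeomorphism of the circle. -/
def IsLiftOf (f : Equiv.Perm S1) (F : ℝ → ℝ) : Prop :=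
  StrictMono F ∧ Continuous F ∧ (∀ x : ℝ, F (x + 1) = F x + 1) ∧
    ∀ x : ℝ, f ((x : ℝ) : S1) = ((F x : ℝ) : S1)

/-- `f` is an orientation-preserving homeomorphism of the circle. -/
def IsPosHomeo (f : Equiv.Perm S1) : Prop := ∃ F, IsLiftOf f F

/-- `ρ` is the translation number of the lift `F`. -/
def HasRotLim (F : ℝ → ℝ) (ρ : ℝ) : Prop :=
  Filter.Tendsto (fun n : ℕ => F^[n] 0 / n) Filter.atTop (nhds ρ)

/-- `G` contains a non-abelian free subgroup (one isomorphic to the free group of rank 2). -/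
def HasFreeSubgroup (G : Subgroup (Equiv.Perm S1)) : Prop :=
  ∃ φ : FreeGroup (Fin 2) →* Equiv.Perm S1, Function.Injective φ ∧ ∀ w, φ w ∈ G

namespace Stmt8Aux

open Filter Topology Set

theorem Equiv.Perm.apply_inv_self {α : Type*} (e : _root_.Equiv.Perm α) (x : α) : e (e⁻¹ x) = x := by
  simp

theorem Equiv.Perm.inv_apply_self {α : Type*} (e : _root_.Equiv.Perm α) (x : α) : e⁻¹ (e x) = x := by
  simp

/-- A continuous integer-valued function on ℝ is constant. -/
lemma int_valued_const {d : ℝ → ℝ} (hc : Continuous d) (hi : ∀ x, ∃ n : ℤ, d x = n)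
    (x y : ℝ) : d x = d y := by
  by_contra hne
  wlog hlt : d x < d y generalizing x y
  · exact this y x (Ne.symm hne) (lt_of_le_of_ne (not_lt.mp hlt) (Ne.symm hne))
  obtain ⟨p, hp⟩ := hi x
  obtain ⟨q, hq⟩ := hi y
  have hmid : (p : ℝ) + 1/2 ∈ Set.Icc (d x) (d y) := by
    constructor
    · rw [hp]; linarith
    · rw [hq]
      have : (p : ℝ) < q := by rw [← hp, ← hq]; exact hlt
      have : p + 1 ≤ q := by exact_mod_cast this
      have : (p : ℝ) + 1 ≤ q := by exact_mod_cast this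
      linarith
  have hz : ∃ z, d z = (p : ℝ) + 1/2 := by
    rcases le_total x y with h | h
    · obtain ⟨z, _, hz⟩ := intermediate_value_Icc h hc.continuousOn hmid
      exact ⟨z, hz⟩
    · obtain ⟨z, _, hz⟩ := intermediate_value_Icc' h hc.continuousOn hmid
      exact ⟨z, hz⟩
  obtain ⟨z, hz⟩ := hz
  obtain ⟨n, hn⟩ := hi z
  rw [hn] at hz
  have h2 : ((n - p : ℤ) : ℝ) = 1/2 := by push_cast; linarith
  rcases le_or_gt (n - p) 0 with h | h
  · have : ((n - p : ℤ) : ℝ) ≤ 0 := by exact_mod_cast h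
    linarith
  · have : (1 : ℤ) ≤ n - p := h
    have : (1 : ℝ) ≤ ((n - p : ℤ) : ℝ) := by exact_mod_cast this
    linarith

/-- Integer periodicity for a lift. -/
lemma per_int {F : ℝ → ℝ} (h1 : ∀ x, F (x + 1) = F x + 1) (x : ℝ) (n : ℤ) :
    F (x + n) = F x + n := by
  have hd : Function.Periodic (fun x => F x - x) 1 := by
    intro t; simp only [h1]; ring
  have := (hd.int_mul n) x
  simp only [mul_one] at this
  linarith [this]

lemma lift_surj {F : ℝ → ℝ} (hcont : Continuous F) (h1 : ∀ x, F (x + 1) = F x + 1) :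
    Function.Surjective F := by
  intro y
  obtain ⟨n, hn⟩ := exists_nat_ge (|y - F 0|)
  have habs₁ : y - F 0 ≤ n := le_trans (le_abs_self _) hn
  have habs₂ : -(n : ℝ) ≤ y - F 0 := by
    have := le_trans (neg_abs_le _) (neg_le_neg hn)
    linarith [neg_abs_le (y - F 0), hn, abs_nonneg (y - F 0)]
  have hFn : F ((n : ℤ) : ℝ) = F 0 + n := by
    have := per_int h1 0 (n : ℤ); simpa using this
  have hFmn : F ((-n : ℤ) : ℝ) = F 0 - n := by
    have := per_int h1 0 (-n : ℤ)
    rw [zero_add] at this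
    rw [this]; push_cast; ring
  have hle : ((-n : ℤ) : ℝ) ≤ ((n : ℤ) : ℝ) := by push_cast; linarith [Nat.cast_nonneg (α := ℝ) n]
  have hmem : y ∈ Set.Icc (F ((-n : ℤ) : ℝ)) (F ((n : ℤ) : ℝ)) := by
    rw [hFn, hFmn]; constructor <;> push_cast <;> linarith
  obtain ⟨x, _, hx⟩ := intermediate_value_Icc hle hcont.continuousOn hmem
  exact ⟨x, hx⟩

lemma strictMono_inv {K : Equiv.Perm ℝ} (h : StrictMono ⇑K) : StrictMono ⇑K⁻¹ := by
  intro a b hab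
  by_contra hc
  push_neg at hc
  have := h.monotone hc
  simp only [Equiv.Perm.apply_inv_self] at this
  exact absurd hab (not_lt.mpr this)

lemma continuous_inv {K : Equiv.Perm ℝ} (h : StrictMono ⇑K) : Continuous ⇑K⁻¹ := by
  have e := StrictMono.orderIsoOfSurjective ⇑K h K.surjective
  have hco : ⇑(StrictMono.orderIsoOfSurjective ⇑K h K.surjective).symm = ⇑K⁻¹ := by
    funext y
    apply K.injective
    rw [Equiv.Perm.apply_inv_self]
    exact StrictMono.orderIsoOfSurjective_self_symm_apply ⇑K h K.surjective y
  rw [← hco]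
  exact OrderIso.continuous _

end Stmt8Aux

namespace Stmt8Aux

section Group

variable (G : Subgroup (Equiv.Perm S1))

/-- The set of lifts of elements of `G`, as permutations of ℝ. -/
def LMem (K : Equiv.Perm ℝ) : Prop := ∃ g ∈ G, IsLiftOf g ⇑K

variable {G}

lemma LMem.mono {K : Equiv.Perm ℝ} (h : LMem G K) : StrictMono ⇑K :=
  h.choose_spec.2.1

lemma LMem.cont {K : Equiv.Perm ℝ} (h : LMem G K) : Continuous ⇑K :=
  h.choose_spec.2.2.1

lemma LMem.per {K : Equiv.Perm ℝ} (h : LMem G K) (x : ℝ) (n : ℤ) :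
    K (x + n) = K x + n :=
  per_int h.choose_spec.2.2.2.1 x n

lemma lmem_one : LMem G 1 := by
  refine ⟨1, G.one_mem, ?_, ?_, ?_, ?_⟩
  · simpa using strictMono_id
  · simpa using continuous_id
  · intro x; simp
  · intro x; simp

lemma LMem.mul {K₁ K₂ : Equiv.Perm ℝ} (h₁ : LMem G K₁) (h₂ : LMem G K₂) :
    LMem G (K₁ * K₂) := by
  obtain ⟨g₁, hg₁, hm₁, hc₁, hp₁, hl₁⟩ := h₁
  obtain ⟨g₂, hg₂, hm₂, hc₂, hp₂, hl₂⟩ := h₂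
  refine ⟨g₁ * g₂, G.mul_mem hg₁ hg₂, ?_, ?_, ?_, ?_⟩
  · exact hm₁.comp hm₂
  · exact hc₁.comp hc₂
  · intro x
    simp only [Equiv.Perm.coe_mul, Function.comp_apply, hp₂, hp₁]
  · intro x
    simp only [Equiv.Perm.coe_mul, Function.comp_apply, Equiv.Perm.mul_apply, hl₂, hl₁]

lemma LMem.inv {K : Equiv.Perm ℝ} (h : LMem G K) : LMem G K⁻¹ := by
  obtain ⟨g, hg, hm, hc, hp, hl⟩ := h
  refine ⟨g⁻¹, G.inv_mem hg, strictMono_inv hm, continuous_inv hm, ?_, ?_⟩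
  · intro x
    apply K.injective
    have : K (K⁻¹ (x + 1)) = x + 1 := Equiv.Perm.apply_inv_self K _
    rw [this, hp, Equiv.Perm.apply_inv_self K]
  · intro x
    have : g ((((K⁻¹ x : ℝ)) : S1)) = ((x : ℝ) : S1) := by
      rw [hl, Equiv.Perm.apply_inv_self K]
    calc g⁻¹ ((x : ℝ) : S1) = g⁻¹ (g ((K⁻¹ x : ℝ) : S1)) := by rw [this]
      _ = ((K⁻¹ x : ℝ) : S1) := Equiv.Perm.inv_apply_self g _

lemma LMem.pow {K : Equiv.Perm ℝ} (h : LMem G K) (n : ℕ) : LMem G (K ^ n) := by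
  induction n with
  | zero => simpa using lmem_one
  | succ n ih => rw [pow_succ]; exact ih.mul h

lemma LMem.zpow {K : Equiv.Perm ℝ} (h : LMem G K) (n : ℤ) : LMem G (K ^ n) := by
  cases n with
  | ofNat n => rw [Int.ofNat_eq_coe, zpow_natCast]; exact h.pow n
  | negSucc n => rw [zpow_negSucc]; exact (h.pow (n + 1)).inv

lemma coe_eq_coe {a b : ℝ} (h : ((a : ℝ) : S1) = (b : S1)) : ∃ n : ℤ, a - b = n := by
  rw [QuotientAddGroup.eq] at h
  obtain ⟨n, hn⟩ := AddSubgroup.mem_zmultiples_iff.mp h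
  exact ⟨-n, by rw [zsmul_eq_mul, mul_one] at hn; push_cast; linarith [hn]⟩

variable (hnofix : ∀ g ∈ G, g ≠ 1 → ∀ x : S1, g x ≠ x)

include hnofix in
/-- Rigidity: two lifts of elements of a fixed-point-free group agreeing at a point agree. -/
lemma rigid {K₁ K₂ : Equiv.Perm ℝ} (h₁ : LMem G K₁) (h₂ : LMem G K₂) {x₀ : ℝ}
    (h : K₁ x₀ = K₂ x₀) : K₁ = K₂ := by
  obtain ⟨g₁, hg₁, hm₁, hc₁, hp₁, hl₁⟩ := h₁
  obtain ⟨g₂, hg₂, hm₂, hc₂, hp₂, hl₂⟩ := h₂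
  -- first, g₁ = g₂
  have hfix : (g₂⁻¹ * g₁) ((x₀ : ℝ) : S1) = ((x₀ : ℝ) : S1) := by
    have e1 : g₁ ((x₀ : ℝ) : S1) = g₂ ((x₀ : ℝ) : S1) := by
      rw [hl₁, hl₂, h]
    rw [Equiv.Perm.mul_apply, e1, Equiv.Perm.inv_apply_self]
  have hgeq : g₁ = g₂ := by
    by_contra hne
    have hne' : g₂⁻¹ * g₁ ≠ 1 := by
      intro hcon
      exact hne (by rw [← one_mul g₁, ← mul_inv_cancel g₂, mul_assoc, hcon, mul_one])
    exact hnofix _ (G.mul_mem (G.inv_mem hg₂) hg₁) hne' _ hfix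
  -- K₁ - K₂ is continuous and integer-valued, hence constant; it vanishes at x₀
  have hint : ∀ x, ∃ n : ℤ, (K₁ x - K₂ x) = n := by
    intro x
    apply coe_eq_coe
    rw [← hl₁, ← hl₂, hgeq]
  have hconst := int_valued_const (by fun_prop) hint
  apply Equiv.ext
  intro x
  have := hconst x x₀
  rw [h] at this
  linarith [this]

include hnofix in
lemma trichot {K₁ K₂ : Equiv.Perm ℝ} (h₁ : LMem G K₁) (h₂ : LMem G K₂) :
    K₁ = K₂ ∨ (∀ x, K₁ x < K₂ x) ∨ (∀ x, K₂ x < K₁ x) := by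
  by_cases hex : ∃ x, K₁ x = K₂ x
  · obtain ⟨x₀, hx₀⟩ := hex
    exact Or.inl (rigid hnofix h₁ h₂ hx₀)
  · push_neg at hex
    have hcont : Continuous fun x => K₁ x - K₂ x := by
      have := h₁.cont; have := h₂.cont; fun_prop
    have hzero : ∀ a b : ℝ, K₁ a < K₂ a → K₂ b < K₁ b → False := by
      intro a b ha hb
      have hmem : (0:ℝ) ∈ Set.Icc (K₁ a - K₂ a) (K₁ b - K₂ b) :=
        ⟨by linarith, by linarith⟩
      have : ∃ z, K₁ z - K₂ z = 0 := by
        rcases le_total a b with h | h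
        · obtain ⟨z, _, hz⟩ := intermediate_value_Icc h hcont.continuousOn hmem
          exact ⟨z, hz⟩
        · obtain ⟨z, _, hz⟩ := intermediate_value_Icc' h hcont.continuousOn hmem
          exact ⟨z, hz⟩
      obtain ⟨z, hz⟩ := this
      exact hex z (by linarith)
    rcases lt_or_gt_of_ne (fun h => hex 0 h : K₁ 0 ≠ K₂ 0) with h0 | h0
    · refine Or.inr (Or.inl fun x => ?_)
      rcases lt_or_gt_of_ne (fun h => hex x h : K₁ x ≠ K₂ x) with hx | hx
      · exact hx
      · exact absurd (hzero 0 x h0 hx) not_false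
    · refine Or.inr (Or.inr fun x => ?_)
      rcases lt_or_gt_of_ne (fun h => hex x h : K₁ x ≠ K₂ x) with hx | hx
      · exact absurd (hzero x 0 hx h0) not_false
      · exact hx

lemma gap {K₁ K₂ : Equiv.Perm ℝ} (h₁ : LMem G K₁) (h₂ : LMem G K₂)
    (hlt : ∀ x, K₁ x < K₂ x) : ∃ δ > 0, ∀ x, K₁ x + δ ≤ K₂ x := by
  set d : ℝ → ℝ := fun x => K₂ x - K₁ x with hd
  have hcont : Continuous d := by have := h₁.cont; have := h₂.cont; fun_prop
  have hper : ∀ x (n : ℤ), d (x + n) = d x := by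
    intro x n
    simp only [hd, h₁.per x n, h₂.per x n]
    ring
  obtain ⟨z, hz, hmin⟩ := isCompact_Icc.exists_isMinOn (Set.nonempty_Icc.mpr zero_le_one)
    hcont.continuousOn
  refine ⟨d z, by have := hlt z; simp only [hd]; linarith, fun x => ?_⟩
  have hfract : d x = d (Int.fract x) := by
    conv_lhs => rw [← Int.fract_add_floor x]
    exact hper (Int.fract x) ⌊x⌋
  have hmem : Int.fract x ∈ Set.Icc (0:ℝ) 1 :=
    ⟨Int.fract_nonneg x, (Int.fract_lt_one x).le⟩
  have hmz : K₂ z - K₁ z ≤ K₂ (Int.fract x) - K₁ (Int.fract x) := hmin hmem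
  simp only [hd] at hfract ⊢
  linarith [hfract, hmz]

/-- Iterating a map that moves every point at least `δ` to the right. -/
lemma pos_iterate {K : Equiv.Perm ℝ} (hmono : Monotone ⇑K) {δ : ℝ}
    (hδ : ∀ x, x + δ ≤ K x) : ∀ (n : ℕ) (x : ℝ), x + n * δ ≤ (⇑K)^[n] x := by
  intro n
  induction n with
  | zero => intro x; simp
  | succ n ih =>
    intro x
    rw [Function.iterate_succ_apply']
    have h1 := hδ ((⇑K)^[n] x)
    have h2 := ih x
    push_cast
    linarith
include hnofix in
/-- Archimedean comparison: any `A` is wedged between consecutive powers of a positive `K`. -/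
lemma arch {A K : Equiv.Perm ℝ} (hA : LMem G A) (hK : LMem G K) (hpos : ∀ x, x < K x) :
    ∃ m : ℤ, (∀ x, (K ^ m) x ≤ A x) ∧ (∀ x, A x < (K ^ (m + 1)) x) := by
  obtain ⟨δ, hδpos, hδ⟩ := gap lmem_one hK (by simpa using hpos)
  simp only [Equiv.Perm.coe_one, id_eq] at hδ
  -- K⁻¹ moves points left by at least δ
  have hδinv : ∀ x, K⁻¹ x ≤ x - δ := by
    intro x
    have h1 : x ≤ K (x - δ) := by have := hδ (x - δ); linarith
    have := (strictMono_inv hK.mono).monotone h1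
    rwa [Equiv.Perm.inv_apply_self] at this
  have hinv_iter : ∀ (n : ℕ) (x : ℝ), (⇑K⁻¹)^[n] x ≤ x - n * δ := by
    intro n
    induction n with
    | zero => intro x; simp
    | succ n ih =>
      intro x
      rw [Function.iterate_succ_apply']
      have h1 := hδinv ((⇑K⁻¹)^[n] x)
      have h2 := ih x
      have h3 := (strictMono_inv hK.mono).monotone (le_of_eq (rfl : (⇑K⁻¹)^[n] x = (⇑K⁻¹)^[n] x))
      push_cast
      have : K⁻¹ ((⇑K⁻¹)^[n] x) ≤ (⇑K⁻¹)^[n] x - δ := h1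
      have h4 : K⁻¹ ((⇑K⁻¹)^[n] x) ≤ x - n * δ - δ := by
        have := (strictMono_inv hK.mono).monotone h2
        calc K⁻¹ ((⇑K⁻¹)^[n] x) ≤ (⇑K⁻¹)^[n] x - δ := h1
          _ ≤ x - n * δ - δ := by linarith
      linarith
  -- the set of integers k with (K^k) 0 ≤ A 0 is nonempty and bounded above
  have hzpow_nonneg : ∀ k : ℤ, 0 ≤ k → (k : ℝ) * δ ≤ (K ^ k) 0 := by
    intro k hk
    lift k to ℕ using hk
    have := pos_iterate hK.mono.monotone hδ k 0
    rw [zpow_natCast, Equiv.Perm.coe_pow] at *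
    push_cast
    simpa using this
  have hbdd : ∃ b : ℤ, ∀ z : ℤ, (K ^ z) 0 ≤ A 0 → z ≤ b := by
    obtain ⟨b, hb⟩ := exists_int_gt (A 0 / δ)
    refine ⟨max b 0, fun z hz => ?_⟩
    rcases le_or_gt z 0 with h | h
    · exact le_trans h (le_max_right _ _)
    · have h1 := hzpow_nonneg z h.le
      have h2 : (z : ℝ) * δ ≤ A 0 := le_trans h1 hz
      have h3 : (z : ℝ) ≤ A 0 / δ := (le_div_iff₀ hδpos).mpr h2
      have : (z : ℝ) < b := lt_of_le_of_lt h3 hb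
      have : z < b := by exact_mod_cast this
      exact le_trans this.le (le_max_left _ _)
  have hnonempty : ∃ z : ℤ, (K ^ z) 0 ≤ A 0 := by
    obtain ⟨n, hn⟩ := exists_nat_ge ((- A 0) / δ)
    refine ⟨-(n : ℤ), ?_⟩
    have h1 : (K ^ (-(n:ℤ))) 0 = (⇑K⁻¹)^[n] 0 := by
      rw [zpow_neg, zpow_natCast, ← inv_pow, Equiv.Perm.coe_pow]
    rw [h1]
    have h2 := hinv_iter n 0
    have h3 : - A 0 ≤ n * δ := by
      have := (div_le_iff₀ hδpos).mp hn
      linarith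
    linarith
  obtain ⟨m, hm, hmax⟩ := Int.exists_greatest_of_bdd
    (let ⟨b, hb⟩ := hbdd; ⟨b, fun z hz => hb z hz⟩) hnonempty
  have hm1 : ¬ ((K ^ (m + 1)) 0 ≤ A 0) := fun h => by linarith [hmax (m+1) h]
  push_neg at hm1
  have hKm : LMem G (K ^ m) := hK.zpow m
  have hKm1 : LMem G (K ^ (m + 1)) := hK.zpow (m + 1)
  constructor
  case h =>
    constructor
    · -- K^m ≤ A pointwise
      rcases trichot hnofix hKm hA with h | h | h
      · intro x; rw [h]
      · intro x; exact (h x).le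
      · exact absurd (h 0) (not_lt.mpr hm)
    · -- A < K^(m+1) pointwise
      rcases trichot hnofix hA hKm1 with h | h | h
      · exact absurd (congrFun (congrArg _ h) 0 : A 0 = (K ^ (m+1)) 0) (ne_of_lt hm1)
      · exact h
      · exact absurd (h 0) (not_lt.mpr hm1.le)

lemma le_inv_of_le {A B : Equiv.Perm ℝ} (hA : StrictMono ⇑A) (h : ∀ x, A x ≤ B x) :
    ∀ x, B⁻¹ x ≤ A⁻¹ x := by
  intro x
  have h1 : A (B⁻¹ x) ≤ B (B⁻¹ x) := h _
  rw [Equiv.Perm.apply_inv_self] at h1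
  have h2 : A (A⁻¹ x) = x := Equiv.Perm.apply_inv_self A x
  exact hA.le_iff_le.mp (by rw [h2]; exact h1)

lemma zpow_apply_zpow (K : Equiv.Perm ℝ) (k l : ℤ) (x : ℝ) :
    (K ^ k) ((K ^ l) x) = (K ^ (k + l)) x := by
  rw [← Equiv.Perm.mul_apply, ← zpow_add]

include hnofix in
lemma comm_aux {A B : Equiv.Perm ℝ} (hA : LMem G A) (hB : LMem G B)
    (hC : ∀ x, x < (A * B * A⁻¹ * B⁻¹) x) : False := by
  set C := A * B * A⁻¹ * B⁻¹ with hCdef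
  have hCm : LMem G C := ((hA.mul hB).mul hA.inv).mul hB.inv
  have hCapp : ∀ x, C x = A (B (A⁻¹ (B⁻¹ x))) := by
    intro x; simp [hCdef, Equiv.Perm.mul_apply]
  -- Key claim: C is smaller than the square of every positive element of the group.
  have claim : ∀ f : Equiv.Perm ℝ, LMem G f → (∀ x, x < f x) → ∀ x, C x < f (f x) := by
    intro f hf hfpos x
    obtain ⟨m, hm₁, hm₂⟩ := arch hnofix hA hf hfpos
    obtain ⟨n, hn₁, hn₂⟩ := arch hnofix hB hf hfpos
    have hfm : ∀ k : ℤ, Monotone ⇑(f ^ k) := fun k => (hf.zpow k).mono.monotone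
    have hstep1 : B⁻¹ x ≤ (f ^ (-n)) x := by
      have := le_inv_of_le (hf.zpow n).mono hn₁ x
      rwa [zpow_neg]
    have hstep2 : A⁻¹ (B⁻¹ x) ≤ (f ^ (-m + -n)) x := by
      have h1 : A⁻¹ (B⁻¹ x) ≤ (f ^ (-m)) (B⁻¹ x) := by
        have := le_inv_of_le (hf.zpow m).mono hm₁ (B⁻¹ x)
        rwa [zpow_neg]
      have h2 : (f ^ (-m)) (B⁻¹ x) ≤ (f ^ (-m)) ((f ^ (-n)) x) := hfm (-m) hstep1
      calc A⁻¹ (B⁻¹ x) ≤ (f ^ (-m)) (B⁻¹ x) := h1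
        _ ≤ (f ^ (-m)) ((f ^ (-n)) x) := h2
        _ = (f ^ (-m + -n)) x := zpow_apply_zpow f _ _ x
    have hstep3 : B (A⁻¹ (B⁻¹ x)) < (f ^ ((n+1) + (-m + -n))) x := by
      calc B (A⁻¹ (B⁻¹ x)) < (f ^ (n+1)) (A⁻¹ (B⁻¹ x)) := hn₂ _
        _ ≤ (f ^ (n+1)) ((f ^ (-m + -n)) x) := hfm (n+1) hstep2
        _ = (f ^ ((n+1) + (-m + -n))) x := zpow_apply_zpow f _ _ x
    have hstep4 : A (B (A⁻¹ (B⁻¹ x))) < (f ^ ((m+1) + ((n+1) + (-m + -n)))) x := by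
      calc A (B (A⁻¹ (B⁻¹ x))) < (f ^ (m+1)) (B (A⁻¹ (B⁻¹ x))) := hm₂ _
        _ ≤ (f ^ (m+1)) ((f ^ ((n+1) + (-m + -n))) x) := hfm (m+1) hstep3.le
        _ = (f ^ ((m+1) + ((n+1) + (-m + -n)))) x := zpow_apply_zpow f _ _ x
    have hexp : (m+1) + ((n+1) + (-m + -n)) = 2 := by ring
    rw [hexp] at hstep4
    have h2 : (f ^ (2:ℤ)) x = f (f x) := by
      rw [show (2:ℤ) = 1 + 1 by norm_num, zpow_add, zpow_one, Equiv.Perm.mul_apply]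
    rw [hCapp x]
    rw [h2] at hstep4
    exact hstep4
  by_cases hex : ∃ a : Equiv.Perm ℝ, LMem G a ∧ (∀ x, x < a x) ∧ (∀ x, a x < C x)
  · -- no minimal positive element: extract f with f ∘ f ≤ C, contradicting the claim
    obtain ⟨a, ha, hapos, haC⟩ := hex
    have he₂ : LMem G (a⁻¹ * C) := ha.inv.mul hCm
    have he₂pos : ∀ x, x < (a⁻¹ * C) x := by
      intro x
      have := (strictMono_inv ha.mono) (haC x)
      rwa [Equiv.Perm.inv_apply_self] at this
    rcases trichot hnofix ha he₂ with h | h | h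
    · -- a = a⁻¹C : a ∘ a = C
      have h2 : a * a = C := by nth_rewrite 2 [h]; rw [mul_inv_cancel_left]
      have hsq : ∀ x, a (a x) = C x := by
        intro x
        rw [← Equiv.Perm.mul_apply, h2]
      have := claim a ha hapos 0
      rw [hsq 0] at this
      exact lt_irrefl _ this
    · -- a < a⁻¹C : a ∘ a < C
      have hsq : ∀ x, a (a x) < C x := by
        intro x
        have h1 : a (a x) < a ((a⁻¹ * C) x) := ha.mono (h x)
        simpa [Equiv.Perm.mul_apply] using h1
      have := claim a ha hapos 0
      exact absurd (hsq 0) (not_lt.mpr this.le)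
    · -- a⁻¹C < a : (a⁻¹C)² ≤ C
      have hsq : ∀ x, (a⁻¹ * C) ((a⁻¹ * C) x) < C x := by
        intro x
        have h1 : (a⁻¹ * C) ((a⁻¹ * C) x) < a ((a⁻¹ * C) x) := h _
        simpa [Equiv.Perm.mul_apply] using h1
      have := claim (a⁻¹ * C) he₂ he₂pos 0
      exact absurd (hsq 0) (not_lt.mpr this.le)
  · -- C is a minimal positive element: then A and B are powers of C, so C = 1, absurd
    have hpow : ∀ D : Equiv.Perm ℝ, LMem G D → ∃ k : ℤ, D = C ^ k := by
      intro D hD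
      obtain ⟨m, hm₁, hm₂⟩ := arch hnofix hD hCm hC
      set P := C ^ (-m) * D with hPdef
      have hPm : LMem G P := (hCm.zpow (-m)).mul hD
      have hPge : ∀ x, x ≤ P x := by
        intro x
        have h1 : (C ^ (-m)) ((C ^ m) x) ≤ (C ^ (-m)) (D x) :=
          (hCm.zpow (-m)).mono.monotone (hm₁ x)
        rw [zpow_apply_zpow, neg_add_cancel, zpow_zero, Equiv.Perm.one_apply] at h1
        exact h1
      have hPlt : ∀ x, P x < C x := by
        intro x
        have h1 : (C ^ (-m)) (D x) < (C ^ (-m)) ((C ^ (m+1)) x) :=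
          (hCm.zpow (-m)).mono (hm₂ x)
        rw [zpow_apply_zpow] at h1
        have : -m + (m + 1) = 1 := by ring
        rw [this, zpow_one] at h1
        exact h1
      rcases trichot hnofix (lmem_one) hPm with h | h | h
      · refine ⟨m, ?_⟩
        have : C ^ (-m) * D = 1 := h.symm
        have hD' : D = C ^ m := by
          rw [zpow_neg] at this
          exact (inv_mul_eq_one.mp this).symm
        exact hD'
      · exact absurd ⟨P, hPm, fun x => by simpa using h x, hPlt⟩ hex
      · have := hPge 0
        have h0 := h 0
        simp only [Equiv.Perm.one_apply] at h0
        linarith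
    obtain ⟨p, hp⟩ := hpow A hA
    obtain ⟨q, hq⟩ := hpow B hB
    have hC1 : C = 1 := by
      rw [hCdef, hp, hq]
      group
    have := hC 0
    rw [hC1] at this
    simp at this

include hnofix in
/-- The group of lifts is abelian. -/
lemma lcomm {A B : Equiv.Perm ℝ} (hA : LMem G A) (hB : LMem G B) : A * B = B * A := by
  have hCm : LMem G (A * B * A⁻¹ * B⁻¹) := ((hA.mul hB).mul hA.inv).mul hB.inv
  rcases trichot hnofix hCm lmem_one with h | h | h
  · have h1 : A * B * A⁻¹ = B := mul_inv_eq_one.mp h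
    exact mul_inv_eq_iff_eq_mul.mp h1
  · -- C < id pointwise, so C⁻¹ = [B,A] is positive
    exfalso
    have hinvpos : ∀ x, x < (A * B * A⁻¹ * B⁻¹)⁻¹ x := by
      intro x
      have hx : (A * B * A⁻¹ * B⁻¹) x < x := by simpa using h x
      have := (strictMono_inv hCm.mono) hx
      rwa [Equiv.Perm.inv_apply_self] at this
    have hrw : (A * B * A⁻¹ * B⁻¹)⁻¹ = B * A * B⁻¹ * A⁻¹ := by
      simp [mul_inv_rev, mul_assoc]
    rw [hrw] at hinvpos
    exact comm_aux hnofix hB hA hinvpos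
  · exfalso
    exact comm_aux hnofix hA hB (fun x => by simpa using h x)

end Group

/-- Promote a lift (as a function) to a permutation of ℝ. -/
noncomputable def liftPerm {f : Equiv.Perm S1} {F : ℝ → ℝ} (hF : IsLiftOf f F) :
    Equiv.Perm ℝ :=
  Equiv.ofBijective F ⟨hF.1.injective, lift_surj hF.2.1 hF.2.2.1⟩

@[simp] lemma liftPerm_coe {f : Equiv.Perm S1} {F : ℝ → ℝ} (hF : IsLiftOf f F) :
    ⇑(liftPerm hF) = F := rfl

section Rot

variable {G : Subgroup (Equiv.Perm S1)} (hnofix : ∀ g ∈ G, g ≠ 1 → ∀ x : S1, g x ≠ x)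

open Filter Topology

include hnofix in
/-- Strict monotonicity of the rotation number on the group of lifts. -/
lemma rot_lt {P Q : Equiv.Perm ℝ} (hP : LMem G P) (hQ : LMem G Q)
    (hlt : ∀ x, P x < Q x) {ρ ρ' : ℝ}
    (h₁ : Tendsto (fun n : ℕ => (⇑P)^[n] 0 / n) atTop (nhds ρ))
    (h₂ : Tendsto (fun n : ℕ => (⇑Q)^[n] 0 / n) atTop (nhds ρ')) : ρ < ρ' := by
  set D := Q * P⁻¹ with hDdef
  have hDm : LMem G D := hQ.mul hP.inv
  have hDpos : ∀ x, x < D x := by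
    intro x
    have h1 : P (P⁻¹ x) < Q (P⁻¹ x) := hlt _
    rw [Equiv.Perm.apply_inv_self] at h1
    exact h1
  obtain ⟨δ, hδpos, hδ⟩ := gap lmem_one hDm (fun x => by simpa using hDpos x)
  simp only [Equiv.Perm.coe_one, id_eq] at hδ
  have hcomm : Commute D P := lcomm hnofix hDm hP
  have hQP : Q = D * P := by rw [hDdef, inv_mul_cancel_right]
  have hkey : ∀ n : ℕ, (⇑P)^[n] 0 + n * δ ≤ (⇑Q)^[n] 0 := by
    intro n
    have h1 : Q ^ n = D ^ n * P ^ n := hcomm.mul_pow n ▸ by rw [hQP, hcomm.mul_pow]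
    have h2 : (⇑Q)^[n] 0 = (⇑(D ^ n)) ((⇑(P ^ n)) 0) := by
      rw [← Equiv.Perm.mul_apply, ← h1, Equiv.Perm.coe_pow]
    rw [h2, Equiv.Perm.coe_pow, Equiv.Perm.coe_pow]
    exact pos_iterate hDm.mono.monotone hδ n ((⇑P)^[n] 0)
  -- pass to the limit
  have hev : ∀ᶠ n : ℕ in atTop, (⇑P)^[n] 0 / n + δ ≤ (⇑Q)^[n] 0 / n := by
    filter_upwards [eventually_ge_atTop 1] with n hn
    have hn' : (0:ℝ) < n := by exact_mod_cast hn
    have h3 : ((⇑P)^[n] 0 + n * δ) / n ≤ (⇑Q)^[n] 0 / n :=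
      (div_le_div_iff_of_pos_right hn').mpr (hkey n)
    rw [add_div, mul_div_cancel_left₀ δ (ne_of_gt hn')] at h3
    exact h3
  have hlim : ρ + δ ≤ ρ' :=
    le_of_tendsto_of_tendsto (h₁.add_const δ) h₂ hev
  linarith

lemma coe_add_int (y : ℝ) (m : ℤ) : ((y : ℝ) : S1) = ((y + (m : ℝ) : ℝ) : S1) := by
  rw [QuotientAddGroup.eq]
  exact AddSubgroup.mem_zmultiples_iff.mpr ⟨m, by simp⟩

end Rot

end Stmt8Aux


open Stmt8Aux Filter in
/-- If every non-identity element of G ≤ Homeo₊(S¹) is fixed-point free, then elements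
of equal rotation number are equal, and consequently G is abelian. -/
theorem stmt8 (G : Subgroup (Equiv.Perm S1)) (hpos : ∀ g ∈ G, IsPosHomeo g)
    (hnofix : ∀ g ∈ G, g ≠ 1 → ∀ x : S1, g x ≠ x) :
    (∀ f ∈ G, ∀ g ∈ G, ∀ F H : ℝ → ℝ, ∀ ρ₁ ρ₂ : ℝ,
        IsLiftOf f F → IsLiftOf g H → HasRotLim F ρ₁ → HasRotLim H ρ₂ →
        (∃ m : ℤ, ρ₁ = ρ₂ + m) → f = g) ∧
      ∀ a ∈ G, ∀ b ∈ G, a * b = b * a := by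
  constructor
  · intro f hf g hg F H ρ₁ ρ₂ hF hH hρ₁ hρ₂ ⟨m, hm⟩
    -- replace H by H + m, still a lift of g, with rotation limit ρ₂ + m = ρ₁
    set H' : ℝ → ℝ := fun x => H x + (m : ℝ) with hH'def
    have hH' : IsLiftOf g H' := by
      refine ⟨fun a b hab => by have := hH.1 hab; simp only [hH'def]; linarith,
        by have := hH.2.1; fun_prop, fun x => by simp only [hH'def, hH.2.2.1]; ring, fun x => ?_⟩
      simp only [hH'def]
      rw [hH.2.2.2 x]
      exact coe_add_int (H x) m
    have hiter : ∀ n : ℕ, H'^[n] 0 = H^[n] 0 + (n : ℝ) * (m : ℝ) := by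
      intro n
      induction n with
      | zero => simp
      | succ n ih =>
        rw [Function.iterate_succ_apply', Function.iterate_succ_apply', ih]
        have hcast : (n : ℝ) * (m : ℝ) = (((n : ℤ) * m : ℤ) : ℝ) := by push_cast; ring
        simp only [hH'def]
        rw [hcast, per_int hH.2.2.1 (H^[n] 0) ((n : ℤ) * m)]
        push_cast
        ring
    have hρ' : Tendsto (fun n : ℕ => H'^[n] 0 / n) atTop (nhds (ρ₂ + m)) := by
      have h1 : Tendsto (fun n : ℕ => H^[n] 0 / n + m) atTop (nhds (ρ₂ + m)) :=
        hρ₂.add_const _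
      apply h1.congr'
      filter_upwards [eventually_ge_atTop 1] with n hn
      have hn' : (n : ℝ) ≠ 0 := by positivity
      rw [hiter n, add_div, mul_div_cancel_left₀ _ hn']
    -- promote the lifts to permutations and compare
    have hKF : LMem G (liftPerm hF) := ⟨f, hf, by rw [liftPerm_coe]; exact hF⟩
    have hKH : LMem G (liftPerm hH') := ⟨g, hg, by rw [liftPerm_coe]; exact hH'⟩
    rcases trichot hnofix hKF hKH with h | h | h
    · -- equal lifts: f = g
      have hFH : F = H' := by
        have := congrArg (fun (e : Equiv.Perm ℝ) => ⇑e) h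
        simpa using this
      apply Equiv.ext
      intro s
      induction s using QuotientAddGroup.induction_on with
      | H x =>
        rw [hF.2.2.2 x, hH'.2.2.2 x, hFH]
    · exfalso
      have := rot_lt hnofix hKF hKH (by simpa using h) (by simpa [HasRotLim] using hρ₁)
        (by simpa using hρ')
      rw [hm] at this
      exact lt_irrefl _ this
    · exfalso
      have := rot_lt hnofix hKH hKF (by simpa using h) (by simpa using hρ')
        (by simpa [HasRotLim] using hρ₁)
      rw [hm] at this
      exact lt_irrefl _ this
  · intro a ha b hb
    obtain ⟨Fa, hFa⟩ := hpos a ha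
    obtain ⟨Fb, hFb⟩ := hpos b hb
    have hKA : LMem G (liftPerm hFa) := ⟨a, ha, by rw [liftPerm_coe]; exact hFa⟩
    have hKB : LMem G (liftPerm hFb) := ⟨b, hb, by rw [liftPerm_coe]; exact hFb⟩
    have hcomm := lcomm hnofix hKA hKB
    apply Equiv.ext
    intro s
    induction s using QuotientAddGroup.induction_on with
    | H x =>
      have hptwise : Fa (Fb x) = Fb (Fa x) := by
        have := congrFun (congrArg (fun (e : Equiv.Perm ℝ) => ⇑e) hcomm) x
        simpa using this
      calc (a * b) ((x : ℝ) : S1) = a (b ((x : ℝ) : S1)) := rfl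
        _ = a ((Fb x : ℝ) : S1) := by rw [hFb.2.2.2]
        _ = ((Fa (Fb x) : ℝ) : S1) := by rw [hFa.2.2.2]
        _ = ((Fb (Fa x) : ℝ) : S1) := by rw [hptwise]
        _ = b ((Fa x : ℝ) : S1) := by rw [hFb.2.2.2]
        _ = b (a ((x : ℝ) : S1)) := by rw [hFa.2.2.2]
        _ = (b * a) ((x : ℝ) : S1) := rfl
end

section
/- Every finite-order element of Homeo₊(S¹) is conjugate in Homeo₊(S¹) to a rotation. -/
/- ## Auxiliary material -/

instance : Fact ((0:ℝ) < 1) := ⟨one_pos⟩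

lemma coe_eq_coe' (x y : ℝ) : ((x : S1) = y) ↔ ∃ n : ℤ, y - x = n := by
  rw [QuotientAddGroup.eq_iff_sub_mem]
  constructor
  · rintro ⟨n, hn⟩; exact ⟨-n, by simp at hn ⊢; linarith⟩
  · rintro ⟨n, hn⟩; exact ⟨-n, by simp; linarith⟩

lemma per_int' {G : ℝ → ℝ} (hp : ∀ x, G (x + 1) = G x + 1) :
    ∀ (n : ℤ) (x), G (x + n) = G x + n := by
  have hp' : ∀ x, G (x - 1) = G x - 1 := fun x => by
    have := hp (x - 1); rw [sub_add_cancel] at this; linarith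
  intro n
  induction n using Int.induction_on with
  | zero => simp
  | succ i ih => intro x; push_cast at ih ⊢
                 rw [show x + ((i:ℝ) + 1) = (x + i) + 1 by ring, hp, ih]; ring
  | pred i ih => intro x; push_cast at ih ⊢
                 rw [show x + (-(i:ℝ) - 1) = (x + (-i)) - 1 by ring, hp', ih]; ring

lemma surj' {G : ℝ → ℝ} (hm : Monotone G) (hc : Continuous G)
    (hp : ∀ x, G (x + 1) = G x + 1) : Function.Surjective G := by
  have hz := per_int' hp
  have hub : ∀ x : ℝ, G 0 + (x - 1) ≤ G x := by
    intro x
    calc G 0 + (x - 1) ≤ G 0 + ⌊x⌋ := by gcongr; linarith [Int.sub_one_lt_floor x]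
      _ = G (0 + ⌊x⌋) := (hz ⌊x⌋ 0).symm
      _ ≤ G x := hm (by simpa using Int.floor_le x)
  have hlb : ∀ x : ℝ, G x ≤ G 0 + (x + 1) := by
    intro x
    calc G x ≤ G (0 + ⌈x⌉) := hm (by simpa using Int.le_ceil x)
      _ = G 0 + ⌈x⌉ := hz ⌈x⌉ 0
      _ ≤ G 0 + (x + 1) := by gcongr; linarith [Int.ceil_lt_add_one x]
  apply hc.surjective
  · exact Filter.tendsto_atTop_mono hub <| Filter.tendsto_atTop_add_const_left _ _
      (Filter.tendsto_atTop_add_const_right _ _ Filter.tendsto_id)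
  · exact Filter.tendsto_atBot_mono hlb <| Filter.tendsto_atBot_add_const_left _ _
      (Filter.tendsto_atBot_add_const_right _ _ Filter.tendsto_id)

lemma int_const' {d : ℝ → ℝ} (hc : Continuous d) (hint : ∀ x, ∃ n : ℤ, d x = n) (x : ℝ) :
    d x = d 0 := by
  have key : ∀ a b : ℝ, d a < d b → False := by
    intro a b hab
    obtain ⟨na, ha⟩ := hint a
    obtain ⟨nb, hb⟩ := hint b
    have hnab : na + 1 ≤ nb := by
      have : (na : ℝ) < nb := by rw [← ha, ← hb]; exact hab
      exact_mod_cast this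
    have hmem : d a + 1/2 ∈ Set.Icc (d a) (d b) := by
      constructor
      · linarith
      · have : (na : ℝ) + 1 ≤ nb := by exact_mod_cast hnab
        rw [ha, hb]; linarith
    have : ∃ y, d y = d a + 1/2 := by
      rcases le_total a b with hle | hle
      · obtain ⟨y, -, hy⟩ := intermediate_value_Icc hle hc.continuousOn hmem
        exact ⟨y, hy⟩
      · obtain ⟨y, -, hy⟩ := intermediate_value_Icc' hle hc.continuousOn hmem
        exact ⟨y, hy⟩
    obtain ⟨y, hy⟩ := this
    obtain ⟨ny, hny⟩ := hint y
    have h2 : ((2 * (ny - na) : ℤ) : ℝ) = 1 := by push_cast; rw [hny] at hy; linarith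
    have : (2 * (ny - na) : ℤ) = 1 := by exact_mod_cast h2
    omega
  rcases lt_trichotomy (d x) (d 0) with h | h | h
  · exact absurd h (fun h => (key x 0 h).elim)
  · exact h
  · exact absurd h (fun h => (key 0 x h).elim)

noncomputable def descFun' (G : ℝ → ℝ) : S1 → S1 :=
  fun y => ((G (AddCircle.equivIco 1 0 y : ℝ) : ℝ) : S1)

lemma descFun_coe' {G : ℝ → ℝ} (hp : ∀ x, G (x + 1) = G x + 1) (x : ℝ) :
    descFun' G ((x : ℝ) : S1) = ((G x : ℝ) : S1) := by
  set r : ℝ := (AddCircle.equivIco 1 0 ((x : ℝ) : S1) : ℝ) with hr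
  have hcoe : ((r : ℝ) : S1) = ((x : ℝ) : S1) :=
    (AddCircle.equivIco 1 0).symm_apply_apply _
  obtain ⟨n, hn⟩ := (coe_eq_coe' r x).mp hcoe
  have hx : x = r + n := by linarith
  show ((G r : ℝ) : S1) = _
  rw [hx, per_int' hp n r]
  rw [coe_eq_coe']
  exact ⟨n, by ring⟩

lemma descend' {G : ℝ → ℝ} (hm : StrictMono G) (hc : Continuous G)
    (hp : ∀ x, G (x + 1) = G x + 1) :
    ∃ g : Equiv.Perm S1, (∀ x : ℝ, g ((x : ℝ) : S1) = ((G x : ℝ) : S1)) ∧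
      IsPosHomeo g⁻¹ := by
  have hsurj : Function.Surjective G := surj' hm.monotone hc hp
  let e : ℝ ≃o ℝ := StrictMono.orderIsoOfSurjective G hm hsurj
  have hce : ⇑e = G := StrictMono.coe_orderIsoOfSurjective G hm hsurj
  set G' : ℝ → ℝ := ⇑e.symm with hG'
  have hGG' : ∀ x, G (G' x) = x := fun x => by
    rw [← hce]; exact e.apply_symm_apply x
  have hG'G : ∀ x, G' (G x) = x := fun x => by
    rw [← hce]; exact e.symm_apply_apply x
  have hp' : ∀ x, G' (x + 1) = G' x + 1 := by
    intro x
    apply hm.injective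
    rw [hGG', hp, hGG']
  let g : Equiv.Perm S1 :=
    { toFun := descFun' G
      invFun := descFun' G'
      left_inv := by
        intro y
        obtain ⟨x, rfl⟩ := QuotientAddGroup.mk_surjective y
        rw [descFun_coe' hp, descFun_coe' hp', hG'G]
      right_inv := by
        intro y
        obtain ⟨x, rfl⟩ := QuotientAddGroup.mk_surjective y
        rw [descFun_coe' hp', descFun_coe' hp, hGG'] }
  refine ⟨g, fun x => descFun_coe' hp x,
    G', e.symm.strictMono, e.symm.continuous, hp', ?_⟩
  intro x
  show g.symm _ = _
  exact descFun_coe' hp' x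

/-- Every finite-order orientation-preserving homeomorphism of the circle is conjugate,
by an orientation-preserving homeomorphism, to a rotation. -/
theorem stmt9 (f : Equiv.Perm S1) (hf : IsPosHomeo f)
    (hord : ∃ k : ℕ, 0 < k ∧ f ^ k = 1) :
    ∃ (h : Equiv.Perm S1) (α : S1), IsPosHomeo h ∧
      h⁻¹ * f * h = Equiv.addLeft α := by
  obtain ⟨F, hFm, hFc, hFp, hFl⟩ := hf
  obtain ⟨k, hk, hfk⟩ := hord
  have hk0 : (k : ℝ) ≠ 0 := Nat.cast_ne_zero.mpr hk.ne'
  -- the iterates of F are lifts of the powers of f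
  have hiter : ∀ (n : ℕ) (x : ℝ), (f ^ n) ((x : ℝ) : S1) = ((F^[n] x : ℝ) : S1) := by
    intro n
    induction n with
    | zero => intro x; simp
    | succ n ih =>
        intro x
        rw [pow_succ, Equiv.Perm.mul_apply, hFl x, ih (F x), ← Function.iterate_succ_apply]
  -- F^[k] is a translation by an integer m
  have hint : ∀ x : ℝ, ∃ n : ℤ, F^[k] x - x = (n : ℝ) := by
    intro x
    have : ((x : ℝ) : S1) = ((F^[k] x : ℝ) : S1) := by
      rw [← hiter k x, hfk]; rfl
    exact (coe_eq_coe' x (F^[k] x)).mp this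
  have hd : Continuous fun x => F^[k] x - x := (hFc.iterate k).sub continuous_id
  obtain ⟨m, hm0⟩ := hint 0
  have hFk : ∀ x : ℝ, F^[k] x = x + m := by
    intro x
    have h1 := int_const' hd hint x
    simp only [sub_zero] at h1 hm0
    linarith
  set α : ℝ := m / k with hα
  have hkα : (k : ℝ) * α = m := by rw [hα]; field_simp
  -- the conjugating "averaged" lift
  set G : ℝ → ℝ := fun x => (∑ i ∈ Finset.range k, (F^[i] x - (i : ℝ) * α)) / k with hG
  have hiterp : ∀ (i : ℕ) (x : ℝ), F^[i] (x + 1) = F^[i] x + 1 := by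
    intro i
    induction i with
    | zero => intro x; simp
    | succ i ih =>
        intro x
        rw [Function.iterate_succ_apply, hFp, ih, ← Function.iterate_succ_apply]
  have hGm : StrictMono G := by
    intro x y hxy
    apply (div_lt_div_iff_of_pos_right (by positivity : (0:ℝ) < k)).mpr
    apply Finset.sum_lt_sum
    · intro i _
      have := (hFm.iterate i).monotone hxy.le
      linarith
    · exact ⟨0, Finset.mem_range.mpr hk, by simpa using hxy⟩
  have hGc : Continuous G :=
    (continuous_finset_sum _ fun i _ => ((hFc.iterate i).sub continuous_const)).div_const _
  have hGp : ∀ x : ℝ, G (x + 1) = G x + 1 := by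
    intro x
    have hsum : ∑ i ∈ Finset.range k, (F^[i] (x + 1) - (i : ℝ) * α)
        = (∑ i ∈ Finset.range k, (F^[i] x - (i : ℝ) * α)) + k := by
      rw [Finset.sum_congr rfl (fun i _ => by rw [hiterp i x]; ring :
        ∀ i ∈ Finset.range k, F^[i] (x + 1) - (i : ℝ) * α = (F^[i] x - (i : ℝ) * α) + 1)]
      rw [Finset.sum_add_distrib, Finset.sum_const, Finset.card_range, nsmul_eq_mul, mul_one]
    show (∑ i ∈ Finset.range k, (F^[i] (x + 1) - (i : ℝ) * α)) / k = _
    rw [hsum, add_div, div_self hk0]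
  have hGF : ∀ x : ℝ, G (F x) = G x + α := by
    intro x
    set u : ℕ → ℝ := fun j => F^[j] x - (j : ℝ) * α with hu
    have huk : u k = x := by
      simp only [hu, hFk x, hkα]; ring
    have hu0 : u 0 = x := by simp [hu]
    have hshift : ∑ i ∈ Finset.range k, u (i + 1) = ∑ i ∈ Finset.range k, u i := by
      have h1 := Finset.sum_range_succ' u k
      have h2 := Finset.sum_range_succ u k
      rw [h2] at h1
      rw [huk, hu0] at h1
      linarith
    have hsum : ∑ i ∈ Finset.range k, (F^[i] (F x) - (i : ℝ) * α)
        = (∑ i ∈ Finset.range k, u i) + (k : ℝ) * α := by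
      calc ∑ i ∈ Finset.range k, (F^[i] (F x) - (i : ℝ) * α)
          = ∑ i ∈ Finset.range k, (u (i + 1) + α) := by
            apply Finset.sum_congr rfl
            intro i _
            rw [← Function.iterate_succ_apply F i x]
            simp only [hu]
            push_cast; ring
        _ = (∑ i ∈ Finset.range k, u (i + 1)) + (k : ℝ) * α := by
            rw [Finset.sum_add_distrib, Finset.sum_const, Finset.card_range, nsmul_eq_mul]
        _ = (∑ i ∈ Finset.range k, u i) + (k : ℝ) * α := by rw [hshift]
    show (∑ i ∈ Finset.range k, (F^[i] (F x) - (i : ℝ) * α)) / k = _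
    rw [hsum, add_div, mul_div_cancel_left₀ α hk0]
  obtain ⟨g, hg, hg'⟩ := descend' hGm hGc hGp
  refine ⟨g⁻¹, ((α : ℝ) : S1), hg', ?_⟩
  rw [inv_inv]
  ext y
  obtain ⟨t, rfl⟩ := QuotientAddGroup.mk_surjective y
  obtain ⟨r, rfl⟩ := surj' hGm.monotone hGc hGp t
  have h1 : g⁻¹ ((G r : ℝ) : S1) = ((r : ℝ) : S1) := by
    rw [← hg r]
    exact Equiv.symm_apply_apply g _
  simp only [Equiv.Perm.mul_apply]
  rw [h1, hFl r, hg (F r), hGF r]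
  show ((G r + α : ℝ) : S1) = ((α : ℝ) : S1) + ((G r : ℝ) : S1)
  rw [show ((G r + α : ℝ) : S1) = ((G r : ℝ) : S1) + ((α : ℝ) : S1) from rfl, add_comm]
end

section
/- Let G be a group of homeomorphisms of the circle stabilizing a finite nonempty subset X ⊆ S¹ setwise, with all elements orientation-preserving. Then: (1) if g ∈ G fixes some point of X, then g fixes every point of X; (2) the restriction of G to X is a cyclic group of order k, where k divides |X|; (3) the set G₀ of elements of G with rotation number 0 is a normal subgroup with G/G₀ cyclic of order k. -/
/-- The rotation number of g is 0. -/
def RotZero (g : Equiv.Perm S1) : Prop :=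
  ∃ F ρ, IsLiftOf g F ∧ HasRotLim F ρ ∧ ∃ m : ℤ, ρ = m

open Filter Function Set


lemma s1_coe_eq_iff' (x y : ℝ) : ((x : ℝ) : S1) = ((y : ℝ) : S1) ↔ ∃ m : ℤ, y = x + m := by
  rw [QuotientAddGroup.eq]
  constructor
  · rintro ⟨m, hm⟩
    exact ⟨m, by simp at hm; linarith⟩
  · rintro ⟨m, rfl⟩
    exact ⟨m, by simp⟩

noncomputable def toDeg1 {f : Equiv.Perm S1} {F : ℝ → ℝ} (h : IsLiftOf f F) : CircleDeg1Lift :=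
  ⟨⟨F, h.1.monotone⟩, h.2.2.1⟩

lemma toDeg1_coe {f : Equiv.Perm S1} {F : ℝ → ℝ} (h : IsLiftOf f F) : ⇑(toDeg1 h) = F := rfl

lemma lift_surj {f : Equiv.Perm S1} {F : ℝ → ℝ} (h : IsLiftOf f F) : Surjective F := by
  have hmap : ∀ (x : ℝ) (m : ℤ), F (x + m) = F x + m := fun x m => (toDeg1 h).map_add_int x m
  have h1 : ∀ x : ℝ, x - 1 + F 0 ≤ F x := by
    intro x
    have : F (x - 1) ≤ F x := h.1.monotone (by linarith)
    have h2 : F 0 + (⌊x⌋ : ℤ) = F (0 + ⌊x⌋) := ((toDeg1 h).map_add_int 0 ⌊x⌋).symm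
    have h3 : F (0 + (⌊x⌋:ℤ)) ≤ F x := h.1.monotone (by
      simp only [zero_add]
      exact Int.floor_le x)
    have := Int.sub_one_lt_floor x
    nlinarith [h.1.monotone (le_of_lt (Int.sub_one_lt_floor x))]
  have h2 : ∀ x : ℝ, F x ≤ x + 1 + F 0 := by
    intro x
    have h3 : F x ≤ F (0 + (⌈x⌉:ℤ)) := h.1.monotone (by simp only [zero_add]; exact Int.le_ceil x)
    rw [hmap 0 ⌈x⌉] at h3
    have := Int.ceil_lt_add_one x
    simpa using h3.trans (by linarith)
  apply Continuous.surjective h.2.1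
  · apply tendsto_atTop_mono h1
    apply tendsto_atTop_add_const_right
    apply tendsto_atTop_add_const_right
    exact tendsto_id
  · apply tendsto_atBot_mono h2
    apply tendsto_atBot_add_const_right
    apply tendsto_atBot_add_const_right
    exact tendsto_id

lemma lift_inv {f : Equiv.Perm S1} {F : ℝ → ℝ} (h : IsLiftOf f F) :
    ∃ Fi : ℝ → ℝ, IsLiftOf f⁻¹ Fi ∧ (∀ x, Fi (F x) = x) ∧ (∀ x, F (Fi x) = x) := by
  set e := StrictMono.orderIsoOfSurjective F h.1 (lift_surj h) with he
  have hecoe : ∀ x, e x = F x := fun x => rfl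
  have hFi : ∀ x, F (e.symm x) = x := fun x => e.apply_symm_apply x
  have hFi' : ∀ x, e.symm (F x) = x := fun x => e.symm_apply_apply x
  refine ⟨⇑e.symm, ⟨e.symm.strictMono, e.symm.continuous, ?_, ?_⟩, hFi', hFi⟩
  · intro x
    apply h.1.injective
    rw [hFi, h.2.2.1, hFi]
  · intro x
    have : f ((e.symm x : ℝ) : S1) = ((x : ℝ) : S1) := by
      rw [h.2.2.2, hFi]
    calc f⁻¹ ((x:ℝ) : S1) = f⁻¹ (f ((e.symm x : ℝ) : S1)) := by rw [this]
      _ = ((e.symm x : ℝ) : S1) := by simp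

lemma lift_comp {f g : Equiv.Perm S1} {F G : ℝ → ℝ} (hf : IsLiftOf f F) (hg : IsLiftOf g G) :
    IsLiftOf (f * g) (F ∘ G) := by
  refine ⟨hf.1.comp hg.1, hf.2.1.comp hg.2.1, ?_, ?_⟩
  · intro x
    simp only [Function.comp_apply, hg.2.2.1, hf.2.2.1]
  · intro x
    simp only [Function.comp_apply, Equiv.Perm.mul_apply, hg.2.2.2, hf.2.2.2]

lemma lift_id : IsLiftOf (1 : Equiv.Perm S1) (id : ℝ → ℝ) :=
  ⟨strictMono_id, continuous_id, fun _ => rfl, fun _ => rfl⟩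

lemma lift_id_tr : IsLiftOf (1 : Equiv.Perm S1) (fun x : ℝ => x + 1) := by
  refine ⟨fun a b hab => by simpa using hab, by continuity, fun x => rfl, fun x => ?_⟩
  simp only [Equiv.Perm.one_apply]
  rw [s1_coe_eq_iff']
  exact ⟨1, by push_cast; ring⟩

lemma lift_sub_int {f : Equiv.Perm S1} {F : ℝ → ℝ} (h : IsLiftOf f F) (m : ℤ) :
    IsLiftOf f (fun x => F x - m) := by
  refine ⟨fun a b hab => by simpa using h.1 hab, h.2.1.sub continuous_const, fun x => by simp [h.2.2.1]; ring,
    fun x => ?_⟩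
  rw [h.2.2.2, s1_coe_eq_iff']
  exact ⟨-m, by push_cast; ring⟩

lemma strictMono_int_step (s : ℤ → ℤ) (h : StrictMono s) : ∀ (j : ℤ) (m : ℕ), s j + m ≤ s (j + m) := by
  intro j m
  induction m with
  | zero => simp
  | succ m ih =>
    have h2 : s (j + m) < s (j + (m + 1)) := h (by omega)
    push_cast
    push_cast at h2 ih
    omega

lemma int_translate (s : ℤ → ℤ) (h1 : StrictMono s) (h2 : Surjective s) :
    ∀ j, s j = j + s 0 := by
  set s' := surjInv h2 with hs'
  have hr : ∀ i, s (s' i) = i := fun i => surjInv_eq h2 i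
  have hl : ∀ j, s' (s j) = j := fun j => h1.injective (hr (s j))
  have h1' : StrictMono s' := by
    intro a b hab
    have : s (s' a) < s (s' b) := by rw [hr, hr]; exact hab
    exact h1.lt_iff_lt.mp this
  have key : ∀ (j : ℤ) (m : ℕ), s (j + m) = s j + m := by
    intro j m
    have hle := strictMono_int_step s h1 j m
    have hle' := strictMono_int_step s' h1' (s j) m
    rw [hl] at hle'
    have := h1.monotone (show j + (m:ℤ) ≤ s' (s j + m) from hle')
    rw [hr] at this
    omega
  intro j
  rcases le_or_gt 0 j with hj | hj
  · have := key 0 j.toNat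
    rw [show ((0:ℤ) + (j.toNat : ℤ)) = j by omega] at this
    omega
  · have := key j (-j).toNat
    rw [show (j + ((-j).toNat : ℤ)) = 0 by omega] at this
    omega

lemma exists_shift (y : ℤ → ℝ) (hmono : StrictMono y) (F : ℝ → ℝ) (hF : StrictMono F)
    (hmaps : ∀ j : ℤ, ∃ i : ℤ, F (y j) = y i) (honto : ∀ i : ℤ, ∃ j : ℤ, F (y j) = y i) :
    ∃ d : ℤ, ∀ j : ℤ, F (y j) = y (j + d) := by
  choose s hs using hmaps
  have hsmono : StrictMono s := by
    intro a b hab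
    have : y (s a) < y (s b) := by
      rw [← hs a, ← hs b]
      exact hF (hmono hab)
    exact hmono.lt_iff_lt.mp this
  have hssurj : Surjective s := by
    intro i
    obtain ⟨j, hj⟩ := honto i
    exact ⟨j, hmono.injective (by rw [← hs j, hj])⟩
  refine ⟨s 0, fun j => ?_⟩
  rw [hs j, int_translate s hsmono hssurj j, add_comm]

lemma shift_zero_of_fixed (n : ℕ) (hn0 : 0 < n) (y : ℤ → ℝ) (hmono : StrictMono y)
    (hper : ∀ (j t : ℤ), y (j + t * n) = y j + t) (F : ℝ → ℝ) (hF : StrictMono F)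
    (hF1 : ∀ x, F (x + 1) = F x + 1) (x : ℝ) (hx : F x = x) (d : ℤ)
    (hd : ∀ j : ℤ, F (y j) = y (j + d)) : d = 0 := by
  set t : ℤ := ⌈x - y 0⌉ with ht
  have hz1 : x ≤ y (t * n) := by
    rw [show t * (n:ℤ) = 0 + t * n by ring, hper]
    have := Int.le_ceil (x - y 0)
    linarith
  have hz2 : y (t * n) < x + 1 := by
    rw [show t * (n:ℤ) = 0 + t * n by ring, hper]
    have := Int.ceil_lt_add_one (x - y 0)
    linarith
  rcases eq_or_lt_of_le hz1 with heq | hlt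
  · -- y (t*n) = x
    have : y (t * n + d) = y (t * n) := by
      rw [← hd, ← heq, hx]
    have := hmono.injective this
    omega
  · -- x < y (t*n) < x + 1
    have claim : ∀ r : ℕ, x < y (t * n + r * d) ∧ y (t * n + r * d) < x + 1 := by
      intro r
      induction r with
      | zero => simpa using ⟨hlt, hz2⟩
      | succ r ih =>
        have hidx : t * n + ((r:ℤ) + 1) * d = (t * n + r * d) + d := by ring
        push_cast
        rw [hidx, ← hd]
        constructor
        · calc x = F x := hx.symm
            _ < F (y (t * n + r * d)) := hF ih.1
        · calc F (y (t * n + r * d)) < F (x + 1) := hF ih.2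
            _ = x + 1 := by rw [hF1, hx]
    rcases lt_trichotomy d 0 with hd0 | hd0 | hd0
    · have h1 := (claim n).1
      have h2 : y (t * n + (n:ℤ) * d) ≤ y (t * n + (-1) * n) := by
        apply hmono.monotone
        have : (n:ℤ) * d ≤ (n:ℤ) * (-1) := by
          apply mul_le_mul_of_nonneg_left (by omega) (by positivity)
        omega
      rw [hper] at h2
      push_cast at h1 h2
      linarith
    · exact hd0
    · have h1 := (claim n).2
      have h2 : y (t * n + 1 * n) ≤ y (t * n + (n:ℤ) * d) := by
        apply hmono.monotone
        have : (n:ℤ) * 1 ≤ (n:ℤ) * d := by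
          apply mul_le_mul_of_nonneg_left (by omega) (by positivity)
        omega
      rw [hper] at h2
      push_cast at h1 h2
      linarith


lemma exists_enum (X : Finset S1) (hX : X.Nonempty) :
    ∃ y : ℤ → ℝ, StrictMono y ∧ (∀ (j : ℤ) (t : ℤ), y (j + t * X.card) = y j + t) ∧
      (∀ j : ℤ, ((y j : ℝ) : S1) ∈ X) ∧
      (∀ r : ℝ, ((r : ℝ) : S1) ∈ X → ∃ j : ℤ, r = y j) := by
  classical
  obtain ⟨n, hn⟩ : ∃ n, X.card = n := ⟨_, rfl⟩
  rw [hn]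
  have hn0 : 0 < n := hn ▸ Finset.card_pos.mpr hX
  -- representative function
  have hrep : ∀ x : S1, ∃ b : ℝ, b ∈ Ico (0:ℝ) 1 ∧ (b : S1) = x := fun x =>
    AddCircle.eq_coe_Ico x
  choose rep hrep1 hrep2 using hrep
  have repinj : InjOn rep X := by
    intro x _ y _ h
    rw [← hrep2 x, ← hrep2 y, h]
  set R : Finset ℝ := X.image rep with hR
  have hcard : R.card = n := by rw [Finset.card_image_of_injOn repinj, hn]
  set e := R.orderIsoOfFin hcard with he
  have heIco : ∀ i : Fin n, (e i : ℝ) ∈ Ico (0:ℝ) 1 := by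
    intro i
    have : (e i : ℝ) ∈ R := (e i).2
    obtain ⟨x, hx, hxe⟩ := Finset.mem_image.mp this
    rw [← hxe]; exact hrep1 x
  have heX : ∀ i : Fin n, (((e i : ℝ) : ℝ) : S1) ∈ X := by
    intro i
    have : (e i : ℝ) ∈ R := (e i).2
    obtain ⟨x, hx, hxe⟩ := Finset.mem_image.mp this
    rw [← hxe, hrep2 x]; exact hx
  have hidx : ∀ j : ℤ, (j % (n:ℤ)).toNat < n := by
    intro j
    have h1 : 0 ≤ j % (n:ℤ) := Int.emod_nonneg j (by exact_mod_cast hn0.ne')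
    have h2 : j % (n:ℤ) < n := Int.emod_lt_of_pos j (by exact_mod_cast hn0)
    omega
  set y : ℤ → ℝ := fun j => (e ⟨(j % (n:ℤ)).toNat, hidx j⟩ : ℝ) + (j / (n:ℤ) : ℤ) with hy
  have hyval : ∀ (j : ℤ) (i : Fin n) (q : ℤ), j = i + q * n → y j = (e i : ℝ) + q := by
    intro j i q hj
    have h1 : j % (n:ℤ) = i := by
      rw [hj, Int.add_mul_emod_self_right]
      exact Int.emod_eq_of_lt (by positivity) (by exact_mod_cast i.2)
    have h2 : j / (n:ℤ) = q := by
      rw [hj, Int.add_mul_ediv_right _ _ (by exact_mod_cast hn0.ne' : (n:ℤ) ≠ 0)]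
      rw [Int.ediv_eq_zero_of_lt (by positivity) (by exact_mod_cast i.2)]
      ring
    rw [hy]
    simp only
    congr 1
    · congr 1
      apply Subtype.ext
      simp [h1]
    · rw [h2]
  have hdec : ∀ j : ℤ, ∃ (i : Fin n) (q : ℤ), j = i + q * n := by
    intro j
    refine ⟨⟨(j % (n:ℤ)).toNat, hidx j⟩, j / (n:ℤ), ?_⟩
    simp only [Fin.val_mk]
    have h1 : 0 ≤ j % (n:ℤ) := Int.emod_nonneg j (by exact_mod_cast hn0.ne')
    rw [Int.toNat_of_nonneg h1]
    linear_combination (Int.emod_add_mul_ediv j (n:ℤ)).symm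
  refine ⟨y, ?_, ?_, ?_, ?_⟩
  · apply strictMono_int_of_lt_succ
    intro j
    obtain ⟨i, q, rfl⟩ := hdec j
    rcases lt_or_ge ((i:ℕ) + 1) n with hi | hi
    · have h1 : y ((i:ℤ) + q * n) = (e i : ℝ) + q := hyval _ i q rfl
      have h2 : y ((i:ℤ) + q * n + 1) = (e ⟨(i:ℕ)+1, hi⟩ : ℝ) + q := by
        apply hyval
        push_cast
        ring
      rw [h1, h2]
      have : e i < e ⟨(i:ℕ)+1, hi⟩ := e.strictMono (by exact Fin.mk_lt_mk.mpr (by omega) : i < ⟨(i:ℕ)+1, hi⟩)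
      have := Subtype.coe_lt_coe.mpr this
      linarith
    · have hieq : (i:ℕ) = n - 1 := by omega
      have h1 : y ((i:ℤ) + q * n) = (e i : ℝ) + q := hyval _ i q rfl
      have h2 := hyval ((i:ℤ) + q * n + 1) ⟨0, hn0⟩ (q + 1) (by
        have hi' : ((i:ℕ):ℤ) = (n:ℤ) - 1 := by omega
        simp only [Fin.val_mk]
        push_cast
        linear_combination hi')
      rw [h1, h2]
      push_cast
      have ha := (heIco i).2
      have hb := (heIco ⟨0, hn0⟩).1
      linarith
  · intro j t
    obtain ⟨i, q, rfl⟩ := hdec j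
    have h1 : y ((i:ℤ) + q * n) = (e i : ℝ) + q := hyval _ i q rfl
    have h2 := hyval ((i:ℤ) + q * n + t * n) i (q + t) (by push_cast; ring)
    rw [h1, h2]; push_cast; ring
  · intro j
    obtain ⟨i, q, rfl⟩ := hdec j
    rw [hyval _ i q rfl]
    have : (((e i : ℝ) : ℝ) : S1) = (((e i : ℝ) + q : ℝ) : S1) := by
      rw [s1_coe_eq_iff']; exact ⟨q, rfl⟩
    rw [← this]
    exact heX i
  · intro r hr
    have hmem : rep ((r : ℝ) : S1) ∈ R := Finset.mem_image_of_mem rep hr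
    obtain ⟨i, hi⟩ := e.surjective ⟨_, hmem⟩
    have hie : (e i : ℝ) = rep ((r : ℝ) : S1) := by rw [hi]
    have : ((rep ((r:ℝ):S1) : ℝ) : S1) = ((r:ℝ):S1) := hrep2 _
    obtain ⟨m, hm⟩ := (s1_coe_eq_iff' _ _).mp this
    exact ⟨(i:ℤ) + m * n, by rw [hyval _ i m rfl, hie]; exact hm⟩


set_option maxHeartbeats 1600000 in
/-- For a group G of orientation-preserving circle homeomorphisms stabilizing a finite
nonempty set X: (1) an element fixing a point of X fixes X pointwise; (2) the
restriction of G to X is cyclic of order k with k dividing |X|; (3) the elements of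
rotation number 0 form a normal subgroup G₀ with G/G₀ cyclic of order k. -/
theorem stmt11 (G : Subgroup (Equiv.Perm S1)) (hpos : ∀ g ∈ G, IsPosHomeo g)
    (X : Finset S1) (hXne : X.Nonempty)
    (hinv : ∀ g ∈ G, ∀ x ∈ X, g x ∈ X) :
    (∀ g ∈ G, (∃ x ∈ X, g x = x) → ∀ x ∈ X, g x = x) ∧
    ∃ k : ℕ, 0 < k ∧ k ∣ X.card ∧
      (∃ σ ∈ G, (∀ x ∈ X, (σ ^ k) x = x) ∧
        (∀ m : ℕ, 0 < m → m < k → ∃ x ∈ X, (σ ^ m) x ≠ x) ∧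
        ∀ g ∈ G, ∃ m : ℕ, ∀ x ∈ X, g x = (σ ^ m) x) ∧
      ∃ H : Subgroup G,
        ((H : Set G) = {g : G | RotZero (g : Equiv.Perm S1)}) ∧ H.Normal ∧
        ∃ φ : G →* Multiplicative (ZMod k),
          Function.Surjective φ ∧ MonoidHom.ker φ = H := by
  
  classical
  obtain ⟨y, hmono, hper, hmem, hsurjY⟩ := exists_enum X hXne
  set n := X.card with hn
  have hn0 : 0 < n := Finset.card_pos.mpr hXne
  -- basic facts
  have hcoe : ∀ i j : ℤ, (((y i : ℝ) : S1) = ((y j : ℝ) : S1)) ↔ ∃ t : ℤ, j = i + t * n := by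
    intro i j
    rw [s1_coe_eq_iff']
    constructor
    · rintro ⟨m, hm⟩
      refine ⟨m, hmono.injective ?_⟩
      rw [hper i m, ← hm]
    · rintro ⟨m, rfl⟩
      exact ⟨m, hper i m⟩
  have hx_rep : ∀ x ∈ X, ∃ j : ℤ, ((y j : ℝ) : S1) = x := by
    intro x hx
    obtain ⟨b, _, hb⟩ := AddCircle.eq_coe_Ico x
    obtain ⟨j, hj⟩ := hsurjY b (by rw [hb]; exact hx)
    exact ⟨j, by rw [← hj, hb]⟩
  -- shift existence for any lift of any element of G
  have hshift : ∀ g ∈ G, ∀ F : ℝ → ℝ, IsLiftOf g F → ∃ d : ℤ, ∀ j : ℤ, F (y j) = y (j + d) := by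
    intro g hg F hF
    obtain ⟨Fi, hFi, hFi1, hFi2⟩ := lift_inv hF
    apply exists_shift y hmono F hF.1
    · intro j
      apply hsurjY
      have : ((F (y j) : ℝ) : S1) = g ((y j : ℝ) : S1) := (hF.2.2.2 (y j)).symm
      rw [this]
      exact hinv g hg _ (hmem j)
    · intro i
      have hX : ((Fi (y i) : ℝ) : S1) ∈ X := by
        have : ((Fi (y i) : ℝ) : S1) = g⁻¹ ((y i : ℝ) : S1) := (hFi.2.2.2 (y i)).symm
        rw [this]
        exact hinv g⁻¹ (inv_mem hg) _ (hmem i)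
      obtain ⟨j, hj⟩ := hsurjY _ hX
      exact ⟨j, by rw [← hj, hFi2]⟩
  -- chosen shift data
  have hP : ∀ g : G, ∃ c : ℤ, ∃ F : ℝ → ℝ, IsLiftOf (g : Equiv.Perm S1) F ∧
      ∀ j : ℤ, F (y j) = y (j + c) := by
    intro g
    obtain ⟨F, hF⟩ := hpos g g.2
    obtain ⟨d, hd⟩ := hshift g g.2 F hF
    exact ⟨d, F, hF, hd⟩
  choose dd FF hFF hdd using hP
  have hact : ∀ (g : G) (j : ℤ), (g : Equiv.Perm S1) ((y j : ℝ) : S1) = ((y (j + dd g) : ℝ) : S1) := by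
    intro g j
    rw [(hFF g).2.2.2, hdd g]
  have hcongr : ∀ (g : G) (c : ℤ), (∃ F : ℝ → ℝ, IsLiftOf (g : Equiv.Perm S1) F ∧
      ∀ j : ℤ, F (y j) = y (j + c)) → ∃ t : ℤ, c = dd g + t * n := by
    intro g c ⟨F, hF, hc⟩
    have h1 : ((y (0 + c) : ℝ) : S1) = ((y (0 + dd g) : ℝ) : S1) := by
      calc ((y (0 + c) : ℝ) : S1) = ((F (y 0) : ℝ) : S1) := by rw [hc]
        _ = (g : Equiv.Perm S1) ((y 0 : ℝ) : S1) := (hF.2.2.2 _).symm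
        _ = ((y (0 + dd g) : ℝ) : S1) := hact g 0
    obtain ⟨t, ht⟩ := (hcoe _ _).mp h1
    exact ⟨-t, by linarith⟩
  have hmul : ∀ g h : G, ∃ t : ℤ, dd (g * h) = dd g + dd h + t * n := by
    intro g h
    have hQ : ∃ F : ℝ → ℝ, IsLiftOf ((g * h : G) : Equiv.Perm S1) F ∧
        ∀ j : ℤ, F (y j) = y (j + (dd h + dd g)) := by
      refine ⟨FF g ∘ FF h, ?_, ?_⟩
      · have := lift_comp (hFF g) (hFF h)
        simpa using this
      · intro j
        simp only [Function.comp_apply, hdd h, hdd g]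
        congr 1
        ring
    obtain ⟨t, ht⟩ := hcongr (g * h) _ hQ
    exact ⟨-t, by linarith⟩
  have hfix_of_one : ∀ g : G, (∃ x ∈ X, (g : Equiv.Perm S1) x = x) → ∃ t : ℤ, dd g = t * n := by
    intro g ⟨x, hx, hgx⟩
    obtain ⟨j, rfl⟩ := hx_rep x hx
    rw [hact g j] at hgx
    obtain ⟨t, ht⟩ := (hcoe _ _).mp hgx
    exact ⟨-t, by linarith⟩
  have hfixiff : ∀ g : G, (∀ x ∈ X, (g : Equiv.Perm S1) x = x) ↔ ∃ t : ℤ, dd g = t * n := by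
    intro g
    constructor
    · intro hfix
      apply hfix_of_one
      obtain ⟨x, hx⟩ := hXne
      exact ⟨x, hx, hfix x hx⟩
    · rintro ⟨t, ht⟩ x hx
      obtain ⟨j, rfl⟩ := hx_rep x hx
      rw [hact g j]
      apply ((hcoe _ _).mpr ⟨-t, by linarith⟩)
  have hsame : ∀ g h : G, (∃ t : ℤ, dd g = dd h + t * n) →
      ∀ x ∈ X, (g : Equiv.Perm S1) x = (h : Equiv.Perm S1) x := by
    rintro g h ⟨t, ht⟩ x hx
    obtain ⟨j, rfl⟩ := hx_rep x hx
    rw [hact g j, hact h j]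
    exact (hcoe _ _).mpr ⟨-t, by linarith⟩
  -- rotation number characterization
  have hrot : ∀ g : G, RotZero (g : Equiv.Perm S1) ↔ ∃ t : ℤ, dd g = t * n := by
    intro g
    constructor
    · rintro ⟨F, ρ, hF, hlim, m, rfl⟩
      have hτ : CircleDeg1Lift.translationNumber (toDeg1 hF) = (m : ℝ) :=
        CircleDeg1Lift.translationNumber_eq_of_tendsto₀ _ hlim
      obtain ⟨x, hx⟩ := ((toDeg1 hF).translationNumber_eq_int_iff hF.2.1).mp hτ
      have hx' : F x = x + m := hx
      have hF2 : IsLiftOf (g : Equiv.Perm S1) (fun r => F r - m) := lift_sub_int hF m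
      obtain ⟨d, hd⟩ := hshift g g.2 _ hF2
      have hd0 : d = 0 := by
        apply shift_zero_of_fixed n hn0 y hmono hper _ hF2.1 hF2.2.2.1 x (show F x - (m:ℝ) = x by linarith) d hd
      obtain ⟨t, ht⟩ := hcongr g d ⟨_, hF2, hd⟩
      exact ⟨-t, by rw [hd0] at ht; linarith⟩
    · rintro ⟨t, ht⟩
      refine ⟨FF g, t, hFF g, ?_, ⟨t, rfl⟩⟩
      have hfix : FF g (y 0) = y 0 + t := by
        rw [hdd g, ht, show (0:ℤ) + t * n = 0 + t * n from rfl, hper]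
      have hτ : CircleDeg1Lift.translationNumber (toDeg1 (hFF g)) = (t : ℝ) :=
        CircleDeg1Lift.translationNumber_of_eq_add_int _ hfix
      have hlim := (toDeg1 (hFF g)).tendsto_translation_number₀
      rw [hτ] at hlim
      have hcoe' : ∀ q : ℕ, ((toDeg1 (hFF g)) ^ q : CircleDeg1Lift) 0 = (FF g)^[q] 0 := by
        intro q
        rw [CircleDeg1Lift.coe_pow]
        rfl
      unfold HasRotLim
      refine hlim.congr fun q => ?_
      rw [hcoe' q]
  -- the subgroup of all shifts
  have hone : IsLiftOf (((1 : G) : Equiv.Perm S1)) (id : ℝ → ℝ) := by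
    rw [OneMemClass.coe_one]
    exact lift_id
  set Tc : Set ℤ := {c : ℤ | ∃ g : G, ∃ F : ℝ → ℝ, IsLiftOf (g : Equiv.Perm S1) F ∧
      ∀ j : ℤ, F (y j) = y (j + c)} with hTc
  have hT0 : (0 : ℤ) ∈ Tc := ⟨1, id, hone, fun j => by simp⟩
  have hTadd : ∀ c1 ∈ Tc, ∀ c2 ∈ Tc, c1 + c2 ∈ Tc := by
    rintro c1 ⟨g1, F1, h1, hs1⟩ c2 ⟨g2, F2, h2, hs2⟩
    refine ⟨g1 * g2, F1 ∘ F2, ?_, fun j => ?_⟩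
    · have := lift_comp h1 h2
      rwa [show ((g1 * g2 : G) : Equiv.Perm S1) = (g1 : Equiv.Perm S1) * (g2 : Equiv.Perm S1)
        from rfl]
    · simp only [Function.comp_apply, hs2, hs1]
      congr 1
      ring
  have hTneg : ∀ c ∈ Tc, -c ∈ Tc := by
    rintro c ⟨g, F, hF, hs⟩
    obtain ⟨Fi, hFi, hFi1, hFi2⟩ := lift_inv hF
    refine ⟨g⁻¹, Fi, by rwa [show ((g⁻¹ : G) : Equiv.Perm S1) = (g : Equiv.Perm S1)⁻¹ from rfl],
      fun j => ?_⟩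
    have : F (y (j + -c)) = y j := by rw [hs, show j + -c + c = j by ring]
    rw [← this, hFi1]
  set T : AddSubgroup ℤ :=
    { carrier := Tc
      zero_mem' := hT0
      add_mem' := fun h1 h2 => hTadd _ h1 _ h2
      neg_mem' := fun h => hTneg _ h } with hTdef
  have hTn : (n : ℤ) ∈ Tc := by
    refine ⟨1, fun x => x + 1, by rw [OneMemClass.coe_one]; exact lift_id_tr, fun j => ?_⟩
    rw [show j + (n:ℤ) = j + 1 * n by ring, hper]
    push_cast
    ring
  have hTdd : ∀ g : G, dd g ∈ Tc := fun g => ⟨g, FF g, hFF g, hdd g⟩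
  obtain ⟨a0, ha0⟩ := Int.subgroup_cyclic T
  have hmemT : ∀ c : ℤ, c ∈ Tc ↔ a0 ∣ c := by
    intro c
    have h1 : c ∈ T ↔ c ∈ AddSubgroup.closure {a0} := by rw [← ha0]
    rw [AddSubgroup.mem_closure_singleton] at h1
    have h2 : c ∈ Tc ↔ c ∈ T := Iff.rfl
    rw [h2, h1]
    constructor
    · rintro ⟨u, hu⟩
      exact ⟨u, by rw [← hu, smul_eq_mul]; ring⟩
    · rintro ⟨u, hu⟩
      exact ⟨u, by rw [hu, smul_eq_mul]; ring⟩
  have ha0n : a0 ∣ (n : ℤ) := (hmemT n).mp hTn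
  have ha0ne : a0 ≠ 0 := by
    rintro rfl
    rw [zero_dvd_iff] at ha0n
    have : n = 0 := by exact_mod_cast ha0n
    omega
  set a : ℕ := a0.natAbs with hadef
  have haT : ∀ c : ℤ, c ∈ Tc ↔ (a : ℤ) ∣ c := by
    intro c
    rw [hmemT c, hadef]
    exact ⟨fun h => (Int.natAbs_dvd).mpr h, fun h => (Int.natAbs_dvd).mp h⟩
  have ha : 0 < a := Int.natAbs_pos.mpr ha0ne
  have han : a ∣ n := by
    have := (haT n).mp hTn
    exact_mod_cast this
  set k : ℕ := n / a with hkdef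
  have hk : a * k = n := Nat.mul_div_cancel' han
  have hk0 : 0 < k := Nat.div_pos (Nat.le_of_dvd hn0 han) ha
  haveI : NeZero k := ⟨hk0.ne'⟩
  have hkz : (a : ℤ) * (k : ℤ) = (n : ℤ) := by exact_mod_cast congrArg (Nat.cast : ℕ → ℤ) hk
  have hkd : k ∣ n := ⟨a, by rw [← hk, mul_comm]⟩
  obtain ⟨σ, Fσ, hFσ, hsσ⟩ := (haT (a : ℤ)).mpr dvd_rfl
  obtain ⟨tσ, htσ⟩ := hcongr σ a ⟨Fσ, hFσ, hsσ⟩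
  have hpow : ∀ m : ℕ, ∃ t : ℤ, dd (σ ^ m) = m * a + t * n := by
    intro m
    induction m with
    | zero =>
      obtain ⟨t, ht⟩ := hcongr 1 0 ⟨id, hone, fun j => by simp⟩
      refine ⟨-t, ?_⟩
      rw [pow_zero]
      push_cast
      linarith
    | succ m ih =>
      obtain ⟨t1, ht1⟩ := ih
      obtain ⟨t2, ht2⟩ := hmul (σ ^ m) σ
      refine ⟨t1 + t2 - tσ, ?_⟩
      rw [pow_succ, ht2, ht1]
      push_cast
      linarith
  have hdvd : ∀ g : G, (a : ℤ) ∣ dd g := fun g => (haT _).mp (hTdd g)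
  -- the homomorphism
  set φf : G → Multiplicative (ZMod k) :=
    fun g => Multiplicative.ofAdd (((dd g / (a : ℤ) : ℤ) : ZMod k)) with hφf
  have hφval : ∀ (g : G) (c t : ℤ), dd g = a * c + t * n →
      φf g = Multiplicative.ofAdd ((c : ZMod k)) := by
    intro g c t h
    have hdiv : dd g / (a : ℤ) = c + t * k := by
      rw [h, show (a:ℤ) * c + t * n = (a:ℤ) * (c + t * k) by rw [← hkz]; ring,
        Int.mul_ediv_cancel_left _ (by exact_mod_cast ha.ne')]
    rw [hφf]
    simp only
    congr 1
    rw [hdiv]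
    push_cast [ZMod.natCast_self]
    ring
  have hd1 : ∃ t : ℤ, dd 1 = t * n := by
    obtain ⟨t, ht⟩ := hcongr 1 0 ⟨id, hone, fun j => by simp⟩
    exact ⟨-t, by linarith⟩
  set φ : G →* Multiplicative (ZMod k) :=
    { toFun := φf
      map_one' := by
        show φf 1 = 1
        obtain ⟨t, ht⟩ := hd1
        have := hφval 1 0 t (by rw [ht]; ring)
        rw [this]
        simp
      map_mul' := by
        intro g h
        show φf (g * h) = φf g * φf h
        obtain ⟨ug, hug⟩ := hdvd g
        obtain ⟨uh, huh⟩ := hdvd h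
        obtain ⟨t, ht⟩ := hmul g h
        have h1 : φf (g * h) = Multiplicative.ofAdd (((ug + uh : ℤ) : ZMod k)) :=
          hφval (g * h) (ug + uh) t (by rw [ht, hug, huh]; ring)
        have h2 : φf g = Multiplicative.ofAdd ((ug : ZMod k)) :=
          hφval g ug 0 (by rw [hug]; ring)
        have h3 : φf h = Multiplicative.ofAdd ((uh : ZMod k)) :=
          hφval h uh 0 (by rw [huh]; ring)
        rw [h1, h2, h3, ← ofAdd_add]
        congr 1
        push_cast
        ring } with hφdef
  have hφpow : ∀ m : ℕ, φ (σ ^ m) = Multiplicative.ofAdd ((m : ZMod k)) := by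
    intro m
    obtain ⟨t, ht⟩ := hpow m
    have := hφval (σ ^ m) m t (by rw [ht]; ring)
    rw [show φ (σ ^ m) = φf (σ ^ m) from rfl, this]
    congr 1
    push_cast
    ring
  have hsurj : Function.Surjective φ := by
    intro z
    refine ⟨σ ^ (Multiplicative.toAdd z).val, ?_⟩
    rw [hφpow]
    rw [ZMod.natCast_rightInverse (Multiplicative.toAdd z)]
    exact ofAdd_toAdd z
  have hker : ∀ g : G, φ g = 1 ↔ RotZero (g : Equiv.Perm S1) := by
    intro g
    obtain ⟨u, hu⟩ := hdvd g
    have h1 : φ g = Multiplicative.ofAdd ((u : ZMod k)) := hφval g u 0 (by rw [hu]; ring)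
    rw [h1, hrot g]
    constructor
    · intro h
      have h2 : ((u : ℤ) : ZMod k) = 0 := by
        have := congrArg Multiplicative.toAdd h
        simpa using this
      have h3 : (k : ℤ) ∣ u := (ZMod.intCast_zmod_eq_zero_iff_dvd u k).mp h2
      obtain ⟨w, hw⟩ := h3
      exact ⟨w, by rw [hu, hw, ← hkz]; ring⟩
    · rintro ⟨t, ht⟩
      have h3 : u = k * t := by
        have h4 : (a : ℤ) * u = (a : ℤ) * (k * t) := by
          rw [← hu, ht, ← hkz]; ring
        exact mul_left_cancel₀ (by exact_mod_cast ha.ne') h4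
      have h5 : ((u : ℤ) : ZMod k) = 0 := by
        rw [h3]
        push_cast [ZMod.natCast_self]
        ring
      rw [h5, ofAdd_zero]
  constructor
  · -- part 1
    intro g hg hx
    exact (hfixiff ⟨g, hg⟩).mpr (hfix_of_one ⟨g, hg⟩ hx)
  refine ⟨k, hk0, hkd, ⟨(σ : Equiv.Perm S1), σ.2, ?_, ?_, ?_⟩, φ.ker, ?_, φ.normal_ker, φ, hsurj, rfl⟩
  · -- σ^k fixes X pointwise
    intro x hx
    obtain ⟨t, ht⟩ := hpow k
    have h1 : ∀ x ∈ X, ((σ ^ k : G) : Equiv.Perm S1) x = x :=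
      (hfixiff (σ ^ k)).mpr ⟨t + 1, by rw [ht]; push_cast; linarith [hkz]⟩
    have h2 := h1 x hx
    rwa [SubmonoidClass.coe_pow] at h2
  · -- σ^m moves some point for 0 < m < k
    intro m hm0 hmk
    by_contra hcon
    push_neg at hcon
    have hcon' : ∀ x ∈ X, ((σ ^ m : G) : Equiv.Perm S1) x = x := by
      intro x hx
      rw [SubmonoidClass.coe_pow]
      exact hcon x hx
    obtain ⟨t', ht'⟩ := (hfixiff (σ ^ m)).mp hcon'
    obtain ⟨t, ht⟩ := hpow m
    have hs : (t' - t) * (n : ℤ) = (m : ℤ) * a := by linear_combination ht - ht'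
    have hupper : (m : ℤ) * a < (n : ℤ) := by
      calc (m : ℤ) * a < (k : ℤ) * a := by
            apply mul_lt_mul_of_pos_right (by exact_mod_cast hmk) (by exact_mod_cast ha)
        _ = n := by rw [← hkz]; ring
    have hlower : (0 : ℤ) < (m : ℤ) * a := by positivity
    rcases le_or_gt (t' - t) 0 with hst | hst
    · have : (t' - t) * (n : ℤ) ≤ 0 :=
        mul_nonpos_of_nonpos_of_nonneg hst (by positivity)
      linarith
    · have h1 : (1 : ℤ) ≤ t' - t := hst
      have : (n : ℤ) ≤ (t' - t) * n := le_mul_of_one_le_left (by positivity) h1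
      linarith
  · -- every g agrees with a power of σ on X
    intro g hg
    obtain ⟨u, hu⟩ := hdvd ⟨g, hg⟩
    set m : ℕ := (u % (k : ℤ)).toNat with hmdef
    have hm : (m : ℤ) = u % (k : ℤ) := Int.toNat_of_nonneg (Int.emod_nonneg u (by exact_mod_cast hk0.ne'))
    have hmod : u % (k : ℤ) = u - k * (u / (k : ℤ)) := Int.emod_def u k
    obtain ⟨t, ht⟩ := hpow m
    refine ⟨m, fun x hx => ?_⟩
    have h1 : dd ⟨g, hg⟩ = dd (σ ^ m) + (u / (k : ℤ) - t) * n := by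
      rw [ht, hu, hm, hmod]
      linear_combination (u / (k : ℤ)) * hkz
    have := hsame ⟨g, hg⟩ (σ ^ m) ⟨u / (k : ℤ) - t, h1⟩ x hx
    rwa [SubmonoidClass.coe_pow] at this
  · -- kernel carrier
    ext g
    simp only [SetLike.mem_coe, MonoidHom.mem_ker, Set.mem_setOf_eq]
    exact hker g
end

section
/- Let z be an element of PL₊([η,ζ]) whose graph lies strictly below the diagonal on the interior (z(t) < t for all t in the open interval), and let g ∈ PL₊([η,ζ]) satisfy g⁻¹ z g = z and g'(η⁺) = 1 (the right derivative of g at η equals 1). Then g is the identity on [η,ζ]. -/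
open Set Filter

/-- An orientation-preserving piecewise-linear homeomorphism of the compact interval
[η, ζ] with finitely many breakpoints (an element of PL₊([η,ζ])). -/
def PLHomeoOn (η ζ : ℝ) (f : ℝ → ℝ) : Prop :=
  f η = η ∧ f ζ = ζ ∧ StrictMonoOn f (Set.Icc η ζ) ∧
  ∃ (n : ℕ) (x : Fin (n + 1) → ℝ), StrictMono x ∧ x 0 = η ∧ x (Fin.last n) = ζ ∧
    ∀ i : Fin n, ∃ a b : ℝ, 0 < a ∧
      ∀ t ∈ Set.Icc (x i.castSucc) (x i.succ), f t = a * t + b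

lemma PLHomeoOn.mapsTo {η ζ : ℝ} {f : ℝ → ℝ} (hf : PLHomeoOn η ζ f) :
    Set.MapsTo f (Set.Icc η ζ) (Set.Icc η ζ) := by
  intro t ht
  obtain ⟨h1, h2, h3, -⟩ := hf
  constructor
  · rcases eq_or_lt_of_le ht.1 with h | h
    · rw [← h, h1]
    · rw [← h1]
      exact le_of_lt (h3 (Set.left_mem_Icc.2 (le_of_lt (lt_of_lt_of_le h ht.2))) ht h)
  · rcases eq_or_lt_of_le ht.2 with h | h
    · rw [h, h2]
    · rw [← h2]
      exact le_of_lt (h3 ht (Set.right_mem_Icc.2 (le_of_lt (lt_of_le_of_lt ht.1 h))) h)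

/-- finding the piece containing a point -/
lemma exists_piece {n : ℕ} {x : Fin (n + 1) → ℝ} (_hx : StrictMono x) {L : ℝ}
    (h0 : x 0 ≤ L) (hl : L < x (Fin.last n)) :
    ∃ i : Fin n, x i.castSucc ≤ L ∧ L < x i.succ := by
  classical
  set S : Finset (Fin (n + 1)) := Finset.univ.filter (fun j => x j ≤ L) with hS
  have hne : S.Nonempty := ⟨0, by simp [hS, h0]⟩
  set m := S.max' hne with hm
  have hmS : m ∈ S := S.max'_mem hne
  have hxm : x m ≤ L := by simpa [hS] using hmS
  have hmne : m ≠ Fin.last n := by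
    intro h; rw [h] at hxm; exact absurd hxm (not_le.2 hl)
  have hmlt : (m : ℕ) < n := by
    have h1 : (m : ℕ) < n + 1 := m.isLt
    have h2 : (m : ℕ) ≠ n := fun h => hmne (Fin.ext (by simp [Fin.last, h]))
    omega
  refine ⟨⟨(m : ℕ), hmlt⟩, ?_, ?_⟩
  · have : (Fin.castSucc ⟨(m : ℕ), hmlt⟩) = m := Fin.ext rfl
    rw [this]; exact hxm
  · by_contra h
    push_neg at h
    have hmem : (Fin.succ ⟨(m : ℕ), hmlt⟩) ∈ S := by
      rw [hS, Finset.mem_filter]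
      exact ⟨Finset.mem_univ _, h⟩
    have hle := S.le_max' _ hmem
    rw [← hm] at hle
    have : (m : ℕ) + 1 ≤ (m : ℕ) := hle
    omega

/-- If z ∈ PL₊([η,ζ]) lies strictly below the diagonal on the interior, and
g ∈ PL₊([η,ζ]) commutes with z and has right derivative 1 at η, then g is the
identity on [η,ζ]. -/
theorem stmt12 (η ζ : ℝ) (hηζ : η < ζ) (z g : ℝ → ℝ)
    (hz : PLHomeoOn η ζ z) (hg : PLHomeoOn η ζ g)
    (hbelow : ∀ t ∈ Set.Ioo η ζ, z t < t)
    (hcomm : ∀ t ∈ Set.Icc η ζ, g (z t) = z (g t))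
    (hslope : HasDerivWithinAt g 1 (Set.Ici η) η) :
    ∀ t ∈ Set.Icc η ζ, g t = t := by
  obtain ⟨hzη, hzζ, hzmono, nz, x, hx, hx0, hxl, hxp⟩ := hz
  obtain ⟨hgη, hgζ, hgmono, ng, y, hy, hy0, hyl, hyp⟩ := hg
  have hzmaps : Set.MapsTo z (Set.Icc η ζ) (Set.Icc η ζ) :=
    PLHomeoOn.mapsTo ⟨hzη, hzζ, hzmono, nz, x, hx, hx0, hxl, hxp⟩
  have hgmaps : Set.MapsTo g (Set.Icc η ζ) (Set.Icc η ζ) :=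
    PLHomeoOn.mapsTo ⟨hgη, hgζ, hgmono, ng, y, hy, hy0, hyl, hyp⟩
  -- number of pieces of g is positive
  have hng : 0 < ng := by
    rcases Nat.eq_zero_or_pos ng with h | h
    · subst h
      have h0l : (0 : Fin 1) = Fin.last 0 := rfl
      rw [h0l, hyl] at hy0
      exact absurd hy0 (ne_of_gt hηζ)
    · exact h
  -- first piece of g : [η, δ] with η < δ, on which g is the identity
  set i0 : Fin ng := ⟨0, hng⟩ with hi0
  obtain ⟨a, b, ha, hab⟩ := hyp i0
  have hy00 : y i0.castSucc = η := by
    have : i0.castSucc = 0 := Fin.ext rfl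
    rw [this, hy0]
  set δ := y i0.succ with hδ
  have hηδ : η < δ := by
    rw [← hy00]
    exact hy (by exact Fin.castSucc_lt_succ)
  -- derivative argument : a = 1, b = 0
  have hmemIcc : Set.Icc η δ ∈ nhdsWithin η (Set.Ici η) :=
    Icc_mem_nhdsGE hηδ
  have hEv : (fun t => a * t + b) =ᶠ[nhdsWithin η (Set.Ici η)] g := by
    filter_upwards [hmemIcc] with t ht
    exact (hab t (by rwa [hy00])).symm
  have hgη' : (fun t => a * t + b) η = g η := (hab η (by rw [hy00]; exact ⟨le_refl η, le_of_lt hηδ⟩)).symm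
  have hlin : HasDerivWithinAt (fun t => a * t + b) 1 (Set.Ici η) η :=
    hslope.congr_of_eventuallyEq hEv hgη'
  have hlin2 : HasDerivWithinAt (fun t => a * t + b) a (Set.Ici η) η := by
    have : HasDerivAt (fun t => a * t + b) a η := by
      simpa using ((hasDerivAt_id η).const_mul a).add_const b
    exact this.hasDerivWithinAt
  have ha1 : a = 1 := by
    have := (uniqueDiffOn_Ici η η (Set.self_mem_Ici)).eq_deriv _ hlin2 hlin
    exact this
  have hb0 : b = 0 := by
    have := hab η (by rw [hy00]; exact ⟨le_refl η, le_of_lt hηδ⟩)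
    rw [hgη, ha1] at this
    linarith
  have hid : ∀ t ∈ Set.Icc η δ, g t = t := by
    intro t ht
    rw [hab t (by rwa [hy00]), ha1, hb0]; ring
  -- z t ≤ t on Icc
  have hzle : ∀ t ∈ Set.Icc η ζ, z t ≤ t := by
    intro t ht
    rcases eq_or_lt_of_le ht.1 with h | h
    · rw [← h, hzη]
    · rcases eq_or_lt_of_le ht.2 with h2 | h2
      · rw [h2, hzζ]
      · exact le_of_lt (hbelow t ⟨h, h2⟩)
  -- iterates
  have hiter : ∀ n : ℕ, ∀ t ∈ Set.Icc η ζ, z^[n] t ∈ Set.Icc η ζ := fun n =>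
    hzmaps.iterate n
  have hcommn : ∀ n : ℕ, ∀ t ∈ Set.Icc η ζ, g (z^[n] t) = z^[n] (g t) := by
    intro n
    induction n with
    | zero => intro t _; simp
    | succ n ih =>
      intro t ht
      rw [Function.iterate_succ_apply', Function.iterate_succ_apply',
        hcomm _ (hiter n t ht), ih t ht]
  have hitermono : ∀ n : ℕ, StrictMonoOn z^[n] (Set.Icc η ζ) := by
    intro n
    induction n with
    | zero => intro s hs t ht hst; simpa using hst
    | succ n ih =>
      intro s hs t ht hst
      rw [Function.iterate_succ_apply', Function.iterate_succ_apply']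
      exact hzmono (hiter n s hs) (hiter n t ht) (ih hs ht hst)
  -- main argument
  intro t ht
  rcases eq_or_lt_of_le ht.1 with h | h
  · rw [← h, hgη]
  rcases eq_or_lt_of_le ht.2 with h2 | h2
  · rw [h2, hgζ]
  -- t ∈ Ioo η ζ
  set u : ℕ → ℝ := fun n => z^[n] t with hu
  have humem : ∀ n, u n ∈ Set.Icc η ζ := fun n => hiter n t ht
  have huanti : Antitone u := by
    apply antitone_nat_of_succ_le
    intro n
    rw [hu]
    simp only [Function.iterate_succ_apply']
    exact hzle _ (humem n)
  have hbdd : BddBelow (Set.range u) := ⟨η, by rintro _ ⟨n, rfl⟩; exact (humem n).1⟩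
  set L := ⨅ n, u n with hL
  have htend : Tendsto u atTop (nhds L) := tendsto_atTop_ciInf huanti hbdd
  have hLle : ∀ n, L ≤ u n := fun n => ciInf_le hbdd n
  have hLη : η ≤ L := le_ciInf fun n => (humem n).1
  have hu0 : u 0 = t := rfl
  have hLζ : L < ζ := lt_of_le_of_lt (hu0 ▸ hLle 0) h2
  -- L = η
  have hLeq : L = η := by
    by_contra hne
    have hLη' : η < L := lt_of_le_of_ne hLη (Ne.symm hne)
    obtain ⟨i, hi1, hi2⟩ := exists_piece (L := L) hx (by rw [hx0]; exact hLη) (by rwa [hxl])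
    obtain ⟨c, d, hc, hcd⟩ := hxp i
    have hEvu : ∀ᶠ n in atTop, u n < x i.succ := by
      have := htend (Iio_mem_nhds hi2)
      simpa using this
    have hEvu2 : ∀ᶠ n in atTop, u (n + 1) = c * u n + d := by
      filter_upwards [hEvu] with n hn
      have hmem : u n ∈ Set.Icc (x i.castSucc) (x i.succ) :=
        ⟨le_trans hi1 (hLle n), le_of_lt hn⟩
      rw [hu]
      simp only [Function.iterate_succ_apply']
      exact hcd _ hmem
    have h1 : Tendsto (fun n => u (n + 1)) atTop (nhds L) :=
      htend.comp (tendsto_add_atTop_nat 1)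
    have h2' : Tendsto (fun n => c * u n + d) atTop (nhds (c * L + d)) :=
      ((htend.const_mul c).add tendsto_const_nhds)
    have heq : c * L + d = L := tendsto_nhds_unique h2' (h1.congr' hEvu2)
    have hzL : z L = L := by
      rw [hcd L ⟨hi1, le_of_lt hi2⟩]; exact heq
    exact absurd hzL (ne_of_lt (hbelow L ⟨hLη', hLζ⟩))
  -- finish
  have hEvδ : ∀ᶠ n in atTop, u n < δ := by
    have := htend (Iio_mem_nhds (hLeq ▸ hηδ))
    simpa using this
  obtain ⟨n, hn⟩ := hEvδ.exists
  have hun : g (u n) = u n := hid (u n) ⟨(humem n).1, le_of_lt hn⟩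
  have : z^[n] (g t) = z^[n] t := by
    rw [← hcommn n t ht]; exact hun
  exact (hitermono n).injOn (hgmaps ht) ht this
end

section
/- Let z ∈ PL₊(J) with z(t) < t for all interior t of the compact interval J = [η,ζ]. Then the map sending each element g of the centralizer of z in PL₊(J) to its initial slope g'(η⁺) ∈ ℝ₊ is an injective group homomorphism into the multiplicative group of positive reals. -/
open Set Filter

namespace Stmt13Aux

lemma cover {n : ℕ} (hn : 0 < n) (x : Fin (n + 1) → ℝ) (hx : StrictMono x) {p : ℝ}
    (hp : p ∈ Set.Icc (x 0) (x (Fin.last n))) :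
    ∃ i : Fin n, p ∈ Set.Icc (x i.castSucc) (x i.succ) := by
  classical
  set S : Finset (Fin (n + 1)) := Finset.univ.filter (fun i => x i ≤ p) with hS
  have h0 : (0 : Fin (n + 1)) ∈ S := by simp [hS, hp.1]
  have hne : S.Nonempty := ⟨0, h0⟩
  set j := S.max' hne with hj
  have hjS : j ∈ S := S.max'_mem hne
  have hjp : x j ≤ p := by simpa [hS] using hjS
  by_cases hlt : (j : ℕ) < n
  · refine ⟨⟨(j : ℕ), hlt⟩, ?_, ?_⟩
    · have hcs : (Fin.castSucc ⟨(j : ℕ), hlt⟩) = j := by ext; simp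
      rw [hcs]; exact hjp
    · by_contra hcon
      push_neg at hcon
      have hmem : (Fin.succ ⟨(j : ℕ), hlt⟩) ∈ S := by
        rw [hS]; simp only [Finset.mem_filter, Finset.mem_univ, true_and]; exact hcon.le
      have hle := S.le_max' _ hmem
      have h2 : j < Fin.succ ⟨(j : ℕ), hlt⟩ := by
        rw [Fin.lt_def]; simp
      exact absurd hle (not_le.2 h2)
  · have hjn : (j : ℕ) = n := by omega
    have hjl : j = Fin.last n := Fin.ext hjn
    have hpe : p = x (Fin.last n) := le_antisymm hp.2 (by rw [hjl] at hjp; exact hjp)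
    refine ⟨⟨n - 1, by omega⟩, ?_, ?_⟩
    · refine le_of_le_of_eq ?_ hpe.symm
      exact hx.monotone (by simp only [Fin.le_def, Fin.coe_castSucc, Fin.val_last]; omega)
    · have hsucc : (Fin.succ (⟨n - 1, by omega⟩ : Fin n)) = Fin.last n := by
        ext; simp [Fin.last]; omega
      rw [hsucc]; exact hpe.le

lemma pl_pos_pieces {η ζ : ℝ} (hηζ : η < ζ) {f : ℝ → ℝ} (hf : PLHomeoOn η ζ f) :
    ∀ (n : ℕ) (x : Fin (n + 1) → ℝ), x 0 = η → x (Fin.last n) = ζ → 0 < n := by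
  intro n x hx0 hxl
  rcases Nat.eq_zero_or_pos n with h | h
  · subst h
    have : x (Fin.last 0) = x 0 := rfl
    rw [hx0, hxl] at this
    exact absurd this (ne_of_gt hηζ)
  · exact h

lemma pl_mapsTo {η ζ : ℝ} (hηζ : η < ζ) {f : ℝ → ℝ} (hf : PLHomeoOn η ζ f) :
    Set.MapsTo f (Set.Icc η ζ) (Set.Icc η ζ) := by
  obtain ⟨h1, h2, hmono, -⟩ := hf
  intro t ht
  have hη : η ∈ Set.Icc η ζ := ⟨le_rfl, hηζ.le⟩
  have hζ : ζ ∈ Set.Icc η ζ := ⟨hηζ.le, le_rfl⟩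
  constructor
  · calc η = f η := h1.symm
      _ ≤ f t := hmono.monotoneOn hη ht ht.1
  · calc f t ≤ f ζ := hmono.monotoneOn ht hζ ht.2
      _ = ζ := h2

lemma pl_continuousOn {η ζ : ℝ} (hηζ : η < ζ) {f : ℝ → ℝ} (hf : PLHomeoOn η ζ f) :
    ContinuousOn f (Set.Icc η ζ) := by
  obtain ⟨h1, h2, hmono, n, x, hx, hx0, hxl, hpiece⟩ := hf
  have hn : 0 < n := pl_pos_pieces hηζ ⟨h1, h2, hmono, n, x, hx, hx0, hxl, hpiece⟩ n x hx0 hxl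
  intro p hp
  have hsub : Set.Icc η ζ ⊆ ⋃ i : Fin n, Set.Icc (x i.castSucc) (x i.succ) := by
    intro q hq
    obtain ⟨i, hi⟩ := cover hn x hx (by rw [hx0, hxl]; exact hq)
    exact Set.mem_iUnion.2 ⟨i, hi⟩
  refine ContinuousWithinAt.mono ?_ hsub
  show Filter.Tendsto f (nhdsWithin p (⋃ i : Fin n, Set.Icc (x i.castSucc) (x i.succ))) (nhds (f p))
  rw [nhdsWithin_iUnion]
  rw [Filter.tendsto_iSup]
  intro i
  by_cases hpi : p ∈ Set.Icc (x i.castSucc) (x i.succ)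
  · obtain ⟨a, b, ha, hab⟩ := hpiece i
    have hcont : ContinuousWithinAt (fun t => a * t + b) (Set.Icc (x i.castSucc) (x i.succ)) p :=
      ((continuous_const.mul continuous_id).add continuous_const).continuousWithinAt
    exact hcont.congr (fun t ht => hab t ht) (hab p hpi)
  · exact continuousWithinAt_of_notMem_closure (by rwa [isClosed_Icc.closure_eq])

lemma pl_init_affine {η ζ : ℝ} (hηζ : η < ζ) {f : ℝ → ℝ} (hf : PLHomeoOn η ζ f) :
    ∃ δ a : ℝ, η < δ ∧ 0 < a ∧ ∀ t ∈ Set.Icc η δ, f t = η + a * (t - η) := by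
  obtain ⟨h1, h2, hmono, n, x, hx, hx0, hxl, hpiece⟩ := hf
  have hn : 0 < n := pl_pos_pieces hηζ ⟨h1, h2, hmono, n, x, hx, hx0, hxl, hpiece⟩ n x hx0 hxl
  set i : Fin n := ⟨0, hn⟩ with hi
  obtain ⟨a, b, ha, hab⟩ := hpiece i
  have hcs : x i.castSucc = η := by
    have : (Fin.castSucc i) = 0 := by ext; simp [hi]
    rw [this, hx0]
  have hδ : η < x i.succ := by
    rw [← hcs]; exact hx (Fin.castSucc_lt_succ (i := i))
  refine ⟨x i.succ, a, hδ, ha, ?_⟩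
  intro t ht
  have htm : t ∈ Set.Icc (x i.castSucc) (x i.succ) := by rw [hcs]; exact ht
  have hb : a * η + b = η := by
    have := hab η (by rw [hcs]; exact ⟨le_rfl, hδ.le⟩)
    rw [h1] at this; linarith
  rw [hab t htm]; linarith

lemma init_deriv {η : ℝ} {f : ℝ → ℝ} {δ a d : ℝ} (hδ : η < δ)
    (haff : ∀ t ∈ Set.Icc η δ, f t = η + a * (t - η))
    (hd : HasDerivWithinAt f d (Set.Ici η) η) : d = a := by
  have hg : HasDerivAt (fun t => η + a * (t - η)) a η := by
    simpa using (((hasDerivAt_id η).sub_const η).const_mul a).const_add η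
  have hmem : Set.Icc η δ ∈ nhdsWithin η (Set.Ici η) := Icc_mem_nhdsGE hδ
  have hev : f =ᶠ[nhdsWithin η (Set.Ici η)] (fun t => η + a * (t - η)) := by
    filter_upwards [hmem] with t ht using haff t ht
  have hfη : f η = η + a * (η - η) := haff η ⟨le_rfl, hδ.le⟩
  have hf' : HasDerivWithinAt f a (Set.Ici η) η :=
    (hg.hasDerivWithinAt).congr_of_eventuallyEq hev hfη
  have hU : UniqueDiffWithinAt ℝ (Set.Ici η) η := uniqueDiffOn_Ici η η Set.self_mem_Ici
  rw [← hd.derivWithin hU, ← hf'.derivWithin hU]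

end Stmt13Aux

/-- For z ∈ PL₊(J) strictly below the diagonal on the interior, the initial-slope map
g ↦ g'(η⁺) on the centralizer of z is an injective group homomorphism into ℝ₊. -/
theorem stmt13 (η ζ : ℝ) (hηζ : η < ζ) (z : ℝ → ℝ) (hz : PLHomeoOn η ζ z)
    (hbelow : ∀ t ∈ Set.Ioo η ζ, z t < t) :
    ∀ g₁ g₂ : ℝ → ℝ, ∀ d₁ d₂ : ℝ,
      PLHomeoOn η ζ g₁ → PLHomeoOn η ζ g₂ →
      (∀ t ∈ Set.Icc η ζ, g₁ (z t) = z (g₁ t)) →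
      (∀ t ∈ Set.Icc η ζ, g₂ (z t) = z (g₂ t)) →
      HasDerivWithinAt g₁ d₁ (Set.Ici η) η →
      HasDerivWithinAt g₂ d₂ (Set.Ici η) η →
      (0 < d₁ ∧
        (d₁ = d₂ → ∀ t ∈ Set.Icc η ζ, g₁ t = g₂ t) ∧
        HasDerivWithinAt (g₁ ∘ g₂) (d₁ * d₂) (Set.Ici η) η) := by
  intro g₁ g₂ d₁ d₂ hg₁ hg₂ hc₁ hc₂ hd₁ hd₂
  obtain ⟨δ₁, a₁, hδ₁, ha₁, haff₁⟩ := Stmt13Aux.pl_init_affine hηζ hg₁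
  obtain ⟨δ₂, a₂, hδ₂, ha₂, haff₂⟩ := Stmt13Aux.pl_init_affine hηζ hg₂
  have hda₁ : d₁ = a₁ := Stmt13Aux.init_deriv hδ₁ haff₁ hd₁
  have hda₂ : d₂ = a₂ := Stmt13Aux.init_deriv hδ₂ haff₂ hd₂
  have hzmaps := Stmt13Aux.pl_mapsTo hηζ hz
  have hg1maps := Stmt13Aux.pl_mapsTo hηζ hg₁
  have hg2maps := Stmt13Aux.pl_mapsTo hηζ hg₂
  have hzcont := Stmt13Aux.pl_continuousOn hηζ hz
  have hitermaps : ∀ n, Set.MapsTo (z^[n]) (Set.Icc η ζ) (Set.Icc η ζ) := hzmaps.iterate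
  have hiterSM : ∀ n, StrictMonoOn (z^[n]) (Set.Icc η ζ) := by
    intro n
    induction n with
    | zero => intro a _ b _ hab; simpa using hab
    | succ n ih =>
      rw [Function.iterate_succ']
      exact hz.2.2.1.comp ih (hitermaps n)
  have hcomm_iter : ∀ (g : ℝ → ℝ), (∀ t ∈ Set.Icc η ζ, g (z t) = z (g t)) →
      ∀ n, ∀ t ∈ Set.Icc η ζ, g (z^[n] t) = z^[n] (g t) := by
    intro g hc n
    induction n with
    | zero => intro t _; simp
    | succ n ih =>
      intro t ht
      rw [Function.iterate_succ_apply', Function.iterate_succ_apply',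
        hc _ (hitermaps n ht), ih t ht]
  -- the reaching lemma
  have reach : ∀ t ∈ Set.Ioo η ζ, ∀ δ, η < δ → ∃ n, z^[n] t ≤ δ := by
    intro t ht δ hδ
    by_contra hcon
    push_neg at hcon
    set u : ℕ → ℝ := fun n => z^[n] t with hu
    have hIoo : ∀ n, u n ∈ Set.Ioo η ζ ∧ u (n + 1) < u n := by
      intro n
      induction n with
      | zero =>
        refine ⟨ht, ?_⟩
        have : u 1 = z t := by simp [hu]
        rw [this]; exact hbelow t ht
      | succ n ih =>
        have h1 : u (n + 1) ∈ Set.Ioo η ζ :=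
          ⟨lt_trans hδ (hcon (n + 1)), lt_of_lt_of_le ih.2 ih.1.2.le⟩
        refine ⟨h1, ?_⟩
        have h2 : u (n + 2) = z (u (n + 1)) := Function.iterate_succ_apply' z (n + 1) t
        rw [h2]; exact hbelow _ h1
    have hanti : Antitone u := antitone_nat_of_succ_le fun n => (hIoo n).2.le
    have hbdd : BddBelow (Set.range u) := ⟨η, by rintro _ ⟨n, rfl⟩; exact (hIoo n).1.1.le⟩
    have hL := tendsto_atTop_ciInf hanti hbdd
    set L := ⨅ n, u n with hLdef
    have hLδ : δ ≤ L := le_ciInf fun n => (hcon n).le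
    have hLt : L < ζ := lt_of_le_of_lt (ciInf_le hbdd 0) ht.2
    have hLmem : L ∈ Set.Ioo η ζ := ⟨lt_of_lt_of_le hδ hLδ, hLt⟩
    have hzL : Filter.Tendsto (fun n => z (u n)) Filter.atTop (nhds (z L)) :=
      ((hzcont L ⟨hLmem.1.le, hLmem.2.le⟩).tendsto).comp
        (tendsto_nhdsWithin_of_tendsto_nhds_of_eventually_within _ hL
          (Filter.Eventually.of_forall fun n => ⟨(hIoo n).1.1.le, (hIoo n).1.2.le⟩))
    have hzL' : Filter.Tendsto (fun n => z (u n)) Filter.atTop (nhds L) := by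
      have heq : (fun n => z (u n)) = fun n => u (n + 1) :=
        funext fun n => (Function.iterate_succ_apply' z n t).symm
      rw [heq]
      exact hL.comp (Filter.tendsto_add_atTop_nat 1)
    have : z L = L := tendsto_nhds_unique hzL hzL'
    exact absurd this (ne_of_lt (hbelow L hLmem))
  refine ⟨hda₁ ▸ ha₁, ?_, ?_⟩
  · -- injectivity
    intro hdd t ht
    rcases eq_or_lt_of_le ht.1 with heq | hl
    · rw [← heq, hg₁.1, hg₂.1]
    rcases eq_or_lt_of_le ht.2 with heq | hr
    · rw [heq, hg₁.2.1, hg₂.2.1]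
    obtain ⟨n, hn⟩ := reach t ⟨hl, hr⟩ (min δ₁ δ₂) (lt_min hδ₁ hδ₂)
    have hsn : z^[n] t ∈ Set.Icc η ζ := hitermaps n ht
    have heqn : g₁ (z^[n] t) = g₂ (z^[n] t) := by
      rw [haff₁ _ ⟨hsn.1, hn.trans (min_le_left _ _)⟩,
        haff₂ _ ⟨hsn.1, hn.trans (min_le_right _ _)⟩, ← hda₁, ← hda₂, hdd]
    have hcn₁ := hcomm_iter g₁ hc₁ n t ht
    have hcn₂ := hcomm_iter g₂ hc₂ n t ht
    exact (hiterSM n).injOn (hg1maps ht) (hg2maps ht) (by rw [← hcn₁, ← hcn₂, heqn])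
  · -- chain rule
    have hmem : Set.Icc η ζ ∈ nhdsWithin η (Set.Ici η) := Icc_mem_nhdsGE hηζ
    have h2' : HasDerivWithinAt g₂ d₂ (Set.Icc η ζ) η := hd₂.mono Set.Icc_subset_Ici_self
    have h1' : HasDerivWithinAt g₁ d₁ (Set.Icc η ζ) (g₂ η) := by
      rw [hg₂.1]; exact hd₁.mono Set.Icc_subset_Ici_self
    exact (h1'.comp η h2' hg2maps).mono_of_mem_nhdsWithin hmem
end

section
/- Let y, z ∈ PL₊(J) both lie strictly below the diagonal on the interior of the compact interval J, let g ∈ PL₊(J), and let n be a positive integer. Then g⁻¹ y g = z if and only if g⁻¹ yⁿ g = zⁿ. -/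
namespace Stmt14Aux

/-- `f` is linear with slope `a` on `[c, c+ε]`. -/
def RightLin (f : ℝ → ℝ) (c a ε : ℝ) : Prop :=
  ∀ t, c ≤ t → t ≤ c + ε → f t = f c + a * (t - c)

/-- `f` is linear with slope `a` on `[c-ε, c]`. -/
def LeftLin (f : ℝ → ℝ) (c a ε : ℝ) : Prop :=
  ∀ t, c - ε ≤ t → t ≤ c → f t = f c + a * (t - c)

variable {η ζ : ℝ} {f : ℝ → ℝ}

theorem maps_mem (hf : PLHomeoOn η ζ f) {t : ℝ} (ht : t ∈ Set.Icc η ζ) :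
    f t ∈ Set.Icc η ζ := by
  obtain ⟨h1, h2, h3, -⟩ := hf
  have hle : η ≤ ζ := le_trans ht.1 ht.2
  constructor
  · have := h3.monotoneOn ⟨le_rfl, hle⟩ ht ht.1
    rwa [h1] at this
  · have := h3.monotoneOn ht ⟨hle, le_rfl⟩ ht.2
    rwa [h2] at this

theorem below_le (hf : PLHomeoOn η ζ f) (hb : ∀ t ∈ Set.Ioo η ζ, f t < t)
    {t : ℝ} (ht : t ∈ Set.Icc η ζ) : f t ≤ t := by
  rcases eq_or_lt_of_le ht.1 with h | h
  · rw [← h, hf.1]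
  · rcases eq_or_lt_of_le ht.2 with h' | h'
    · rw [h', hf.2.1]
    · exact (hb t ⟨h, h'⟩).le

theorem iter_mem (hf : PLHomeoOn η ζ f) (k : ℕ) {t : ℝ} (ht : t ∈ Set.Icc η ζ) :
    f^[k] t ∈ Set.Icc η ζ := by
  induction k with
  | zero => simpa using ht
  | succ k ih => rw [Function.iterate_succ_apply']; exact maps_mem hf ih

theorem iter_le (hf : PLHomeoOn η ζ f) (hb : ∀ t ∈ Set.Ioo η ζ, f t < t)
    (k : ℕ) {t : ℝ} (ht : t ∈ Set.Icc η ζ) : f^[k] t ≤ t := by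
  induction k with
  | zero => simp
  | succ k ih =>
    rw [Function.iterate_succ_apply']
    exact le_trans (below_le hf hb (iter_mem hf k ht)) ih

theorem rightLin_exists (hf : PLHomeoOn η ζ f) {c : ℝ} (h1 : η ≤ c) (h2 : c < ζ) :
    ∃ a ε, 0 < a ∧ 0 < ε ∧ c + ε ≤ ζ ∧ RightLin f c a ε := by
  classical
  obtain ⟨-, -, -, m, x, hx, hx0, hxl, hpiece⟩ := hf
  set T : Finset (Fin (m + 1)) := Finset.univ.filter (fun j => x j ≤ c) with hT
  have h0T : (0 : Fin (m + 1)) ∈ T := by simp [hT, hx0, h1]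
  have hTne : T.Nonempty := ⟨0, h0T⟩
  set j := T.max' hTne with hj
  have hjc : x j ≤ c := by
    have := T.max'_mem hTne
    simp only [hT, Finset.mem_filter] at this
    exact this.2
  have hjl : j ≠ Fin.last m := by
    intro h
    rw [h, hxl] at hjc
    linarith
  have hjm : (j : ℕ) < m := Fin.val_lt_last hjl
  set i : Fin m := ⟨j, hjm⟩ with hi
  have hcast : i.castSucc = j := by ext; simp [hi]
  have hsucc : c < x i.succ := by
    by_contra h
    push_neg at h
    have hmem : i.succ ∈ T := by simp [hT, h]
    have hle := T.le_max' _ hmem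
    rw [← hj] at hle
    have : (j : ℕ) < (i.succ : ℕ) := by simp [hi, Fin.val_succ]
    have := Fin.le_def.mp hle
    omega
  obtain ⟨a, b, ha, hab⟩ := hpiece i
  refine ⟨a, x i.succ - c, ha, by linarith, ?_, ?_⟩
  · have : x i.succ ≤ ζ := by rw [← hxl]; exact hx.monotone (Fin.le_last _)
    linarith
  · intro t ht1 ht2
    have hxt : t ∈ Set.Icc (x i.castSucc) (x i.succ) :=
      ⟨by rw [hcast]; linarith, by linarith⟩
    have hxc : c ∈ Set.Icc (x i.castSucc) (x i.succ) :=
      ⟨by rw [hcast]; exact hjc, hsucc.le⟩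
    rw [hab t hxt, hab c hxc]
    ring

theorem leftLin_exists (hf : PLHomeoOn η ζ f) {c : ℝ} (h1 : η < c) (h2 : c ≤ ζ) :
    ∃ a ε, 0 < a ∧ 0 < ε ∧ η ≤ c - ε ∧ LeftLin f c a ε := by
  classical
  obtain ⟨-, -, -, m, x, hx, hx0, hxl, hpiece⟩ := hf
  set T : Finset (Fin (m + 1)) := Finset.univ.filter (fun j => c ≤ x j) with hT
  have hlT : (Fin.last m) ∈ T := by simp [hT, hxl, h2]
  have hTne : T.Nonempty := ⟨_, hlT⟩
  set j := T.min' hTne with hj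
  have hjc : c ≤ x j := by
    have := T.min'_mem hTne
    simp only [hT, Finset.mem_filter] at this
    exact this.2
  have hj0 : (j : ℕ) ≠ 0 := by
    intro h
    have : j = 0 := Fin.ext h
    rw [this, hx0] at hjc
    linarith
  have hjm : (j : ℕ) - 1 < m := by
    have := j.isLt
    omega
  set i : Fin m := ⟨(j : ℕ) - 1, hjm⟩ with hi
  have hisucc : i.succ = j := by
    ext
    simp only [hi, Fin.val_succ]
    omega
  have hcast : x i.castSucc < c := by
    by_contra h
    push_neg at h
    have hmem : i.castSucc ∈ T := by simp [hT, h]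
    have hle := T.min'_le _ hmem
    rw [← hj] at hle
    have h2' := Fin.le_def.mp hle
    simp only [Fin.coe_castSucc, hi] at h2'
    omega
  obtain ⟨a, b, ha, hab⟩ := hpiece i
  refine ⟨a, c - x i.castSucc, ha, by linarith, ?_, ?_⟩
  · have : x 0 ≤ x i.castSucc := hx.monotone (Fin.zero_le _)
    rw [hx0] at this
    linarith
  · intro t ht1 ht2
    have hxt : t ∈ Set.Icc (x i.castSucc) (x i.succ) :=
      ⟨by linarith, by rw [hisucc]; linarith⟩
    have hxc : c ∈ Set.Icc (x i.castSucc) (x i.succ) :=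
      ⟨hcast.le, by rw [hisucc]; exact hjc⟩
    rw [hab t hxt, hab c hxc]
    ring




theorem rightLin_comp {f h F : ℝ → ℝ} {c a ε a' ε' : ℝ} (hF : ∀ t, F t = h (f t))
    (hf : RightLin f c a ε) (hh : RightLin h (f c) a' ε')
    (ha : 0 < a) (hε : 0 < ε) (hε' : 0 < ε') :
    ∃ δ, 0 < δ ∧ δ ≤ ε ∧ RightLin F c (a' * a) δ := by
  refine ⟨min ε (ε' / a), lt_min hε (div_pos hε' ha), min_le_left _ _, ?_⟩
  intro t h1 h2
  have hml := min_le_left ε (ε' / a)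
  have hmr := min_le_right ε (ε' / a)
  have h2a : t ≤ c + ε := by linarith
  have hft := hf t h1 h2a
  have hd0 : 0 ≤ t - c := by linarith
  have hd1 : t - c ≤ ε' / a := by linarith
  have ha' : a * (ε' / a) = ε' := by field_simp
  have key1 : f c ≤ f t := by nlinarith
  have key2 : f t ≤ f c + ε' := by nlinarith [mul_le_mul_of_nonneg_left hd1 ha.le]
  have hht := hh (f t) key1 key2
  rw [hF t, hht, hft, hF c]
  ring

theorem leftLin_comp {f h F : ℝ → ℝ} {c a ε a' ε' : ℝ} (hF : ∀ t, F t = h (f t))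
    (hf : LeftLin f c a ε) (hh : LeftLin h (f c) a' ε')
    (ha : 0 < a) (hε : 0 < ε) (hε' : 0 < ε') :
    ∃ δ, 0 < δ ∧ δ ≤ ε ∧ LeftLin F c (a' * a) δ := by
  refine ⟨min ε (ε' / a), lt_min hε (div_pos hε' ha), min_le_left _ _, ?_⟩
  intro t h1 h2
  have hml := min_le_left ε (ε' / a)
  have hmr := min_le_right ε (ε' / a)
  have h1a : c - ε ≤ t := by linarith
  have hft := hf t h1a h2
  have hd0 : t - c ≤ 0 := by linarith
  have hd1 : -(ε' / a) ≤ t - c := by linarith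
  have ha' : a * (ε' / a) = ε' := by field_simp
  have key1 : f t ≤ f c := by nlinarith
  have key2 : f c - ε' ≤ f t := by nlinarith [mul_le_mul_of_nonneg_left hd1 ha.le]
  have hht := hh (f t) key2 key1
  rw [hF t, hht, hft, hF c]
  ring

theorem rightLin_slope_eq {f1 f2 : ℝ → ℝ} {c a1 ε1 a2 ε2 δ : ℝ}
    (h1 : RightLin f1 c a1 ε1) (h2 : RightLin f2 c a2 ε2)
    (hε1 : 0 < ε1) (hε2 : 0 < ε2) (hδ : 0 < δ)
    (heq : ∀ t, c ≤ t → t ≤ c + δ → f1 t = f2 t) : a1 = a2 := by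
  set m := min δ (min ε1 ε2) with hm
  have hm0 : 0 < m := lt_min hδ (lt_min hε1 hε2)
  have hm1 : m ≤ δ := min_le_left _ _
  have hm2 : m ≤ ε1 := le_trans (min_le_right _ _) (min_le_left _ _)
  have hm3 : m ≤ ε2 := le_trans (min_le_right _ _) (min_le_right _ _)
  have e0 : f1 c = f2 c := heq c le_rfl (by linarith)
  have e1 : f1 (c + m) = f2 (c + m) := heq _ (by linarith) (by linarith)
  have A := h1 (c + m) (by linarith) (by linarith)
  have B := h2 (c + m) (by linarith) (by linarith)
  rw [show c + m - c = m by ring] at A B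
  rw [A, B] at e1
  have : a1 * m = a2 * m := by linarith
  exact mul_right_cancel₀ hm0.ne' this

theorem leftLin_val_eq {f1 f2 : ℝ → ℝ} {c a1 ε1 a2 ε2 δ : ℝ}
    (h1 : LeftLin f1 c a1 ε1) (h2 : LeftLin f2 c a2 ε2)
    (hε1 : 0 < ε1) (hε2 : 0 < ε2) (hδ : 0 < δ)
    (heq : ∀ t, c - δ ≤ t → t < c → f1 t = f2 t) : f1 c = f2 c := by
  set m := min δ (min ε1 ε2) with hm
  have hm0 : 0 < m := lt_min hδ (lt_min hε1 hε2)
  have hm1 : m ≤ δ := min_le_left _ _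
  have hm2 : m ≤ ε1 := le_trans (min_le_right _ _) (min_le_left _ _)
  have hm3 : m ≤ ε2 := le_trans (min_le_right _ _) (min_le_right _ _)
  have E1 : f1 (c - m) = f2 (c - m) := heq _ (by linarith) (by linarith)
  have E2 : f1 (c - m / 2) = f2 (c - m / 2) := heq _ (by linarith) (by linarith)
  have A1 := h1 (c - m) (by linarith) (by linarith)
  have A2 := h1 (c - m / 2) (by linarith) (by linarith)
  have B1 := h2 (c - m) (by linarith) (by linarith)
  have B2 := h2 (c - m / 2) (by linarith) (by linarith)
  rw [A1, B1] at E1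
  rw [A2, B2] at E2
  have k1 : f1 c - f2 c = (a1 - a2) * m := by linear_combination E1
  have k2 : f1 c - f2 c = (a1 - a2) * (m / 2) := by linear_combination E2
  have k3 : (a1 - a2) * (m / 2) = 0 := by linear_combination k2 - k1
  linarith [k2, k3]

theorem pow_inj_pos {a b : ℝ} (ha : 0 < a) (hb : 0 < b) {n : ℕ} (hn : 0 < n)
    (h : a ^ n = b ^ n) : a = b := by
  rcases lt_trichotomy a b with hl | he | hl
  · exfalso
    have := pow_lt_pow_left₀ hl ha.le hn.ne'
    rw [h] at this
    exact lt_irrefl _ this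
  · exact he
  · exfalso
    have := pow_lt_pow_left₀ hl hb.le hn.ne'
    rw [h] at this
    exact lt_irrefl _ this

theorem iter_rightLin_fixed {f : ℝ → ℝ} {p a ε : ℝ} (hp : f p = p)
    (hR : RightLin f p a ε) (ha : 0 < a) (ha1 : a ≤ 1) (hε : 0 < ε) :
    ∀ k, RightLin (f^[k]) p (a ^ k) ε := by
  intro k
  induction k with
  | zero =>
    intro t h1 h2
    simp only [Function.iterate_zero_apply, pow_zero]
    ring
  | succ k ih =>
    intro t h1 h2
    have hft := hR t h1 h2
    rw [hp] at hft
    have hd : 0 ≤ t - p := by linarith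
    have h1' : p ≤ f t := by nlinarith
    have h2' : f t ≤ p + ε := by nlinarith [mul_le_of_le_one_left hd ha1]
    simp only [Function.iterate_succ_apply]
    rw [hp, ih (f t) h1' h2', hft, Function.iterate_fixed hp k]
    ring

theorem iter_rightLin (hf : PLHomeoOn η ζ f) (hb : ∀ t ∈ Set.Ioo η ζ, f t < t) :
    ∀ k, ∀ c, η ≤ c → c < ζ →
      ∃ A ε, 0 < A ∧ 0 < ε ∧ c + ε ≤ ζ ∧ RightLin (f^[k]) c A ε := by
  intro k
  induction k with
  | zero =>
    intro c h1 h2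
    exact ⟨1, ζ - c, one_pos, by linarith, by linarith,
      fun t ht1 ht2 => by simp only [Function.iterate_zero_apply]; ring⟩
  | succ k ih =>
    intro c h1 h2
    obtain ⟨a, ε, ha, hε, hb1, hR⟩ := rightLin_exists hf h1 h2
    have hm := maps_mem hf ⟨h1, h2.le⟩
    have hfc2 : f c < ζ := lt_of_le_of_lt (below_le hf hb ⟨h1, h2.le⟩) h2
    obtain ⟨A, ε', hA, hε', hb2, hR'⟩ := ih (f c) hm.1 hfc2
    obtain ⟨δ, hδ, hδε, hRc⟩ :=
      rightLin_comp (F := f^[k + 1]) (fun t => Function.iterate_succ_apply f k t) hR hR' ha hε hε'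
    exact ⟨A * a, δ, by positivity, hδ, by linarith, hRc⟩

theorem iter_conj {z y g : ℝ → ℝ} (hz : PLHomeoOn η ζ z)
    (hbz : ∀ t ∈ Set.Ioo η ζ, z t < t) {c : ℝ} (hcζ : c ≤ ζ)
    (hzy : ∀ t, η ≤ t → t ≤ c → g (z t) = y (g t)) :
    ∀ k t, η ≤ t → t ≤ c → g (z^[k] t) = y^[k] (g t) := by
  intro k
  induction k with
  | zero => intro t _ _; simp
  | succ k ih =>
    intro t h1 h2
    have htI : t ∈ Set.Icc η ζ := ⟨h1, h2.trans hcζ⟩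
    have h3 : η ≤ z^[k] t := (iter_mem hz k htI).1
    have h4 : z^[k] t ≤ c := le_trans (iter_le hz hbz k htI) h2
    rw [Function.iterate_succ_apply', Function.iterate_succ_apply',
      hzy _ h3 h4, ih t h1 h2]

theorem step (hηζ : η < ζ) {y z g : ℝ → ℝ}
    (hy : PLHomeoOn η ζ y) (hz : PLHomeoOn η ζ z) (hg : PLHomeoOn η ζ g)
    (hby : ∀ t ∈ Set.Ioo η ζ, y t < t) (hbz : ∀ t ∈ Set.Ioo η ζ, z t < t)
    {n : ℕ} (hn : 0 < n)
    (H : ∀ t ∈ Set.Icc η ζ, g (z^[n] t) = y^[n] (g t))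
    {c : ℝ} (hc1 : η ≤ c) (hc2 : c < ζ)
    (Hc : ∀ t, η ≤ t → t ≤ c → g (z t) = y (g t)) :
    ∃ ε, 0 < ε ∧ ∀ t, c ≤ t → t ≤ c + ε → g (z t) = y (g t) := by

  rcases eq_or_lt_of_le hc1 with hcη | hcη
  · -- c = η : fixed point case
    subst hcη
    obtain ⟨α, εz, hα, hεz, hbz1, Rz⟩ := rightLin_exists hz (le_refl η) hηζ
    obtain ⟨β, εy, hβ, hεy, hby1, Ry⟩ := rightLin_exists hy (le_refl η) hηζ
    obtain ⟨γ, εg, hγ, hεg, hbg1, Rg⟩ := rightLin_exists hg (le_refl η) hηζ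
    have hzη := hz.1
    have hyη := hy.1
    have hgη := hg.1
    have hα1 : α < 1 := by
      have ht : η + εz / 2 ∈ Set.Ioo η ζ := ⟨by linarith, by linarith⟩
      have h1 := hbz _ ht
      have h2 := Rz (η + εz / 2) (by linarith) (by linarith)
      rw [hzη] at h2
      nlinarith
    have hβ1 : β < 1 := by
      have ht : η + εy / 2 ∈ Set.Ioo η ζ := ⟨by linarith, by linarith⟩
      have h1 := hby _ ht
      have h2 := Ry (η + εy / 2) (by linarith) (by linarith)
      rw [hyη] at h2
      nlinarith
    have Rzn : RightLin (z^[n]) η (α ^ n) εz := iter_rightLin_fixed hzη Rz hα hα1.le hεz n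
    have Ryn : RightLin (y^[n]) η (β ^ n) εy := iter_rightLin_fixed hyη Ry hβ hβ1.le hεy n
    have hzn : z^[n] η = η := Function.iterate_fixed hzη n
    obtain ⟨δ1, hδ1, hδ1z, R1⟩ := rightLin_comp (F := fun t => g (z^[n] t)) (fun t => rfl)
      Rzn (by rw [hzn]; exact Rg) (by positivity) hεz hεg
    obtain ⟨δ2, hδ2, hδ2g, R2⟩ := rightLin_comp (F := fun t => y^[n] (g t)) (fun t => rfl)
      Rg (by rw [hgη]; exact Ryn) hγ hεg hεy
    have hsl : γ * α ^ n = β ^ n * γ :=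
      rightLin_slope_eq R1 R2 hδ1 hδ2 hδ1 (fun t h1 h2 => H t ⟨h1, by linarith⟩)
    have hαβ : α = β := by
      have h' : γ * α ^ n = γ * β ^ n := by rw [hsl]; ring
      exact pow_inj_pos hα hβ hn (mul_left_cancel₀ hγ.ne' h')
    obtain ⟨δ7, hδ7, hδ7z, R7⟩ := rightLin_comp (F := fun t => g (z t)) (fun t => rfl)
      Rz (by rw [hzη]; exact Rg) hα hεz hεg
    obtain ⟨δ8, hδ8, hδ8g, R8⟩ := rightLin_comp (F := fun t => y (g t)) (fun t => rfl)
      Rg (by rw [hgη]; exact Ry) hγ hεg hεy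
    refine ⟨min δ7 δ8, lt_min hδ7 hδ8, ?_⟩
    intro t h1 h2
    have h7 := R7 t h1 (by have := min_le_left δ7 δ8; linarith)
    have h8 := R8 t h1 (by have := min_le_right δ7 δ8; linarith)
    simp only at h7 h8
    rw [h7, h8, hzη, hgη, hyη, hαβ]
    ring
  · -- η < c
    have hcI : c ∈ Set.Icc η ζ := ⟨hc1, hc2.le⟩
    set d := z c with hdd
    have hdc : d < c := hbz c ⟨hcη, hc2⟩
    have hdη : η < d := by
      have := hz.2.2.1 ⟨le_rfl, hηζ.le⟩ hcI hcη
      rwa [hz.1] at this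
    have hdζ : d < ζ := hdc.trans hc2
    have gd_eq : g d = y (g c) := Hc c hc1 le_rfl
    have hgcI := maps_mem hg hcI
    have hgc2 : g c < ζ := by
      have := hg.2.2.1 hcI ⟨hηζ.le, le_rfl⟩ hc2
      rwa [hg.2.1] at this
    set e := y (g c) with hee
    have heI : e ∈ Set.Icc η ζ := maps_mem hy ⟨hgcI.1, hgc2.le⟩
    have he2 : e < ζ := lt_of_le_of_lt (below_le hy hby ⟨hgcI.1, hgc2.le⟩) hgc2
    set dn := z^[n - 1] d with hdn
    have hdnI : dn ∈ Set.Icc η ζ := iter_mem hz (n - 1) ⟨hdη.le, hdζ.le⟩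
    have hdn2 : dn < ζ := lt_of_le_of_lt (iter_le hz hbz (n - 1) ⟨hdη.le, hdζ.le⟩) hdζ
    obtain ⟨α, εα, hα, hεα, hbα, Rα⟩ := rightLin_exists hz hc1 hc2
    obtain ⟨A, εA, hA, hεA, hbA, RA⟩ := iter_rightLin hz hbz (n - 1) d hdη.le hdζ
    obtain ⟨γc, εγc, hγc, hεγc, hbγc, Rγc⟩ := rightLin_exists hg hc1 hc2
    obtain ⟨γd, εγd, hγd, hεγd, hbγd, Rγd⟩ := rightLin_exists hg hdη.le hdζ
    obtain ⟨γn, εγn, hγn, hεγn, hbγn, Rγn⟩ := rightLin_exists hg hdnI.1 hdn2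
    obtain ⟨β, εβ, hβ, hεβ, hbβ, Rβ⟩ := rightLin_exists hy hgcI.1 hgc2
    obtain ⟨B, εB, hB, hεB, hbB, RB⟩ := iter_rightLin hy hby (n - 1) e heI.1 he2
    have hn' : n - 1 + 1 = n := Nat.succ_pred_eq_of_pos hn
    have hitz : ∀ t, z^[n] t = z^[n - 1] (z t) := fun t => by
      conv_lhs => rw [← hn']
      exact Function.iterate_succ_apply z (n - 1) t
    have hity : ∀ t, y^[n] t = y^[n - 1] (y t) := fun t => by
      conv_lhs => rw [← hn']
      exact Function.iterate_succ_apply y (n - 1) t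
    have RA' : RightLin (z^[n - 1]) (z c) A εA := by rw [← hdd]; exact RA
    obtain ⟨δ1, hδ1, hδ1α, R1⟩ := rightLin_comp (F := z^[n]) hitz Rα RA' hα hεα hεA
    have hznc : z^[n] c = dn := by rw [hitz c, ← hdd, hdn]
    obtain ⟨δ2, hδ2, hδ2', R2⟩ := rightLin_comp (F := fun t => g (z^[n] t)) (fun t => rfl)
      R1 (by rw [hznc]; exact Rγn) (by positivity) hδ1 hεγn
    have RB' : RightLin (y^[n - 1]) (y (g c)) B εB := by rw [← hee]; exact RB
    obtain ⟨δ3, hδ3, hδ3', R3⟩ := rightLin_comp (F := y^[n]) hity Rβ RB' hβ hεβ hεB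
    obtain ⟨δ4, hδ4, hδ4', R4⟩ := rightLin_comp (F := fun t => y^[n] (g t)) (fun t => rfl)
      Rγc R3 hγc hεγc hδ3
    have Eq1 : γn * (A * α) = B * β * γc :=
      rightLin_slope_eq R2 R4 hδ2 hδ4 hδ2
        (fun t h1 h2 => H t ⟨hc1.trans h1, by linarith⟩)
    have Rγn' : RightLin g (z^[n - 1] d) γn εγn := by rw [← hdn]; exact Rγn
    obtain ⟨δ5, hδ5, hδ5', R5⟩ := rightLin_comp (F := fun t => g (z^[n - 1] t)) (fun t => rfl)
      RA Rγn' hA hεA hεγn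
    have RB'' : RightLin (y^[n - 1]) (g d) B εB := by rw [gd_eq]; exact RB
    obtain ⟨δ6, hδ6, hδ6', R6⟩ := rightLin_comp (F := fun t => y^[n - 1] (g t)) (fun t => rfl)
      Rγd RB'' hγd hεγd hεB
    have Eq2 : γn * A = B * γd := by
      refine rightLin_slope_eq R5 R6 hδ5 hδ6
        (lt_min (lt_min hδ5 hδ6) (by linarith : (0:ℝ) < c - d)) ?_
      intro t h1 h2
      have hm1 := min_le_right (min δ5 δ6) (c - d)
      exact iter_conj hz hbz hc2.le Hc (n - 1) t (hdη.le.trans h1) (by linarith)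
    have hkey : B * (γd * α) = B * (β * γc) := by linear_combination Eq1 - α * Eq2
    have key : γd * α = β * γc := mul_left_cancel₀ hB.ne' hkey
    have Rγd' : RightLin g (z c) γd εγd := by rw [← hdd]; exact Rγd
    obtain ⟨δ7, hδ7, hδ7', R7⟩ := rightLin_comp (F := fun t => g (z t)) (fun t => rfl)
      Rα Rγd' hα hεα hεγd
    obtain ⟨δ8, hδ8, hδ8', R8⟩ := rightLin_comp (F := fun t => y (g t)) (fun t => rfl)
      Rγc Rβ hγc hεγc hεβ
    refine ⟨min δ7 δ8, lt_min hδ7 hδ8, ?_⟩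
    intro t h1 h2
    have h7 := R7 t h1 (by have := min_le_left δ7 δ8; linarith)
    have h8 := R8 t h1 (by have := min_le_right δ7 δ8; linarith)
    simp only at h7 h8
    rw [h7, h8, ← hdd, gd_eq, key]


end Stmt14Aux

/-- For y, z ∈ PL₊(J) strictly below the diagonal on the interior, g ∈ PL₊(J), and a
positive integer n: g conjugates z to y iff g conjugates zⁿ to yⁿ. -/
theorem stmt14 (η ζ : ℝ) (hηζ : η < ζ) (y z g : ℝ → ℝ)
    (hy : PLHomeoOn η ζ y) (hz : PLHomeoOn η ζ z) (hg : PLHomeoOn η ζ g)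
    (hby : ∀ t ∈ Set.Ioo η ζ, y t < t) (hbz : ∀ t ∈ Set.Ioo η ζ, z t < t)
    (n : ℕ) (hn : 0 < n) :
    (∀ t ∈ Set.Icc η ζ, g (z t) = y (g t)) ↔
      (∀ t ∈ Set.Icc η ζ, g (z^[n] t) = y^[n] (g t)) := by
  constructor
  · intro hc t ht
    exact Stmt14Aux.iter_conj hz hbz le_rfl (fun t h1 h2 => hc t ⟨h1, h2⟩) n t ht.1 ht.2
  · intro H
    by_contra hcon
    push_neg at hcon
    obtain ⟨t0, ht0, hne⟩ := hcon
    set S := {t : ℝ | t ∈ Set.Icc η ζ ∧ g (z t) ≠ y (g t)} with hS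
    have hne0 : S.Nonempty := ⟨t0, ht0, hne⟩
    have hbd : BddBelow S := ⟨η, fun s hs => hs.1.1⟩
    set c := sInf S with hc
    have hclb : ∀ s ∈ S, c ≤ s := fun s hs => csInf_le hbd hs
    have hc1 : η ≤ c := le_csInf hne0 (fun s hs => hs.1.1)
    have hct0 : c ≤ t0 := hclb t0 ⟨ht0, hne⟩
    have hc2 : c ≤ ζ := hct0.trans ht0.2
    have hlt : ∀ t, η ≤ t → t < c → g (z t) = y (g t) := by
      intro t h1 h2
      by_contra hne'
      exact absurd (hclb t ⟨⟨h1, h2.le.trans hc2⟩, hne'⟩) (not_le.mpr h2)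
    have hceq : g (z c) = y (g c) := by
      rcases eq_or_lt_of_le hc1 with h | h
      · rw [← h, hz.1, hg.1, hy.1]
      · obtain ⟨az, εz, haz, hεz, hbz1, Lz⟩ := Stmt14Aux.leftLin_exists hz h hc2
        have hzcη : η < z c := by
          have := hz.2.2.1 ⟨le_rfl, hηζ.le⟩ ⟨hc1, hc2⟩ h
          rwa [hz.1] at this
        have hzcζ : z c ≤ ζ := le_trans (Stmt14Aux.below_le hz hbz ⟨hc1, hc2⟩) hc2
        obtain ⟨ag, εg1, hag, hεg1, hu1, Lgz⟩ := Stmt14Aux.leftLin_exists hg hzcη hzcζ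
        obtain ⟨ag2, εg2, hag2, hεg2, hu2, Lgc⟩ := Stmt14Aux.leftLin_exists hg h hc2
        have hgcη : η < g c := by
          have := hg.2.2.1 ⟨le_rfl, hηζ.le⟩ ⟨hc1, hc2⟩ h
          rwa [hg.1] at this
        have hgcζ : g c ≤ ζ := (Stmt14Aux.maps_mem hg ⟨hc1, hc2⟩).2
        obtain ⟨ay, εy, hay, hεy, hu3, Lyg⟩ := Stmt14Aux.leftLin_exists hy hgcη hgcζ
        obtain ⟨δ1, hδ1, hd1, L1⟩ := Stmt14Aux.leftLin_comp (F := fun t => g (z t))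
          (fun t => rfl) Lz Lgz haz hεz hεg1
        obtain ⟨δ2, hδ2, hd2, L2⟩ := Stmt14Aux.leftLin_comp (F := fun t => y (g t))
          (fun t => rfl) Lgc Lyg hag2 hεg2 hεy
        exact Stmt14Aux.leftLin_val_eq L1 L2 hδ1 hδ2
          (show (0:ℝ) < c - η by linarith)
          (fun t ht1 ht2 => hlt t (by linarith) ht2)
    have hcζ : c < ζ := by
      rcases eq_or_lt_of_le hc2 with h | h
      · exfalso
        have heq0 : t0 = c := le_antisymm (by rw [h]; exact ht0.2) hct0
        rw [heq0] at hne
        exact hne hceq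
      · exact h
    have Hcfull : ∀ t, η ≤ t → t ≤ c → g (z t) = y (g t) := by
      intro t h1 h2
      rcases eq_or_lt_of_le h2 with h | h
      · rw [h]; exact hceq
      · exact hlt t h1 h
    obtain ⟨ε, hε, hstep⟩ := Stmt14Aux.step hηζ hy hz hg hby hbz hn H hc1 hcζ Hcfull
    have hfin : c + ε ≤ c := by
      refine le_csInf hne0 ?_
      intro s hs
      by_contra hh
      push_neg at hh
      exact hs.2 (hstep s (hclb s hs) hh.le)
    linarith
end

section
/- Let y, z, g ∈ PL₊([η,ζ]) with g⁻¹ y g = z, and suppose there exist α > 0 and c > 1 such that y(t) - η = z(t) - η = c(t - η) for all t ∈ [η, η + α]. Then g is linear on [η, η+α] ∩ g⁻¹([η, η+α]); in particular the graph of g is linear inside the square [η, η+α] × [η, η+α]. -/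
/-- Initial linearity box: if y and z agree and are linear with slope c > 1 on
[η, η+α], then any PL conjugator g from z to y is linear on the part of [η, η+α]
mapped by g into [η, η+α]; the graph of g is linear inside the square
[η,η+α] × [η,η+α]. -/
theorem stmt16 (η ζ : ℝ) (hηζ : η < ζ) (y z g : ℝ → ℝ)
    (hy : PLHomeoOn η ζ y) (hz : PLHomeoOn η ζ z) (hg : PLHomeoOn η ζ g)
    (hconj : ∀ t ∈ Set.Icc η ζ, y (g t) = g (z t))
    (α : ℝ) (hα : 0 < α) (hαζ : η + α ≤ ζ) (c : ℝ) (hc : 1 < c)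
    (hlin : ∀ t ∈ Set.Icc η (η + α),
      y t - η = c * (t - η) ∧ z t - η = c * (t - η)) :
    ∃ a b : ℝ, ∀ t ∈ Set.Icc η (η + α),
      g t ∈ Set.Icc η (η + α) → g t = a * t + b := by
  obtain ⟨hgη, hgζ, hgmono, n, x, hx, hx0, hxl, hpieces⟩ := hg
  have hc0 : (0:ℝ) < c := lt_trans one_pos hc
  -- n ≥ 1
  have hn : 0 < n := by
    rcases Nat.eq_zero_or_pos n with h0 | h
    · exfalso
      subst h0
      have : x 0 = x (Fin.last 0) := by congr
      rw [hx0, hxl] at this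
      exact absurd this (ne_of_lt hηζ)
    · exact h
  set i : Fin n := ⟨0, hn⟩ with hi
  obtain ⟨a, b, ha, hab⟩ := hpieces i
  have hcast : x i.castSucc = η := by
    have : (i.castSucc : Fin (n+1)) = 0 := by
      apply Fin.ext; simp [hi]
    rw [this, hx0]
  have hsucclt : η < x i.succ := by
    rw [← hcast]
    exact hx ((Fin.castSucc_lt_succ (i := i)))
  set δ : ℝ := min (x i.succ - η) α with hδdef
  have hδ : 0 < δ := lt_min (by linarith) hα
  have hδ1 : δ ≤ x i.succ - η := min_le_left _ _
  have hδ2 : δ ≤ α := min_le_right _ _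
  -- b = η - a*η
  have hbval : b = η - a * η := by
    have := hab η ⟨hcast.le, le_of_lt hsucclt⟩
    rw [hgη] at this
    linarith
  -- monotonicity helper
  have hmono := hgmono.monotoneOn
  have hgeη : ∀ s, 0 ≤ s → s ≤ α → η ≤ g (η + s) := by
    intro s hs hsα
    have h1 : (η:ℝ) ∈ Set.Icc η ζ := ⟨le_refl _, le_of_lt hηζ⟩
    have h2 : η + s ∈ Set.Icc η ζ := ⟨by linarith, by linarith⟩
    have := hmono h1 h2 (by linarith)
    rwa [hgη] at this
  -- key functional equation
  have key : ∀ s : ℝ, 0 ≤ s → c * s ≤ α → g (η + s) - η ≤ α →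
      g (η + c * s) = η + c * (g (η + s) - η) := by
    intro s hs hsc hgs
    have hsα : s ≤ α := by nlinarith
    have ht : η + s ∈ Set.Icc η ζ := ⟨by linarith, by linarith⟩
    have htα : η + s ∈ Set.Icc η (η + α) := ⟨by linarith, by linarith⟩
    have hzt := (hlin _ htα).2
    have hztval : z (η + s) = η + c * s := by
      have : η + s - η = s := by ring
      rw [this] at hzt; linarith
    have hgt : g (η + s) ∈ Set.Icc η (η + α) :=
      ⟨hgeη s hs hsα, by linarith⟩
    have hyg := (hlin _ hgt).1
    have hcj := hconj _ ht
    rw [hztval] at hcj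
    rw [← hcj]
    linarith
  -- main induction
  have main : ∀ N : ℕ, ∀ s : ℝ, 0 ≤ s → s ≤ α → g (η + s) - η ≤ α →
      s ≤ δ * c ^ N → g (η + s) = η + a * s := by
    intro N
    induction N with
    | zero =>
      intro s hs hsα hgs hsδ
      simp only [pow_zero, mul_one] at hsδ
      have : g (η + s) = a * (η + s) + b :=
        hab _ ⟨by rw [hcast]; linarith, by linarith⟩
      rw [this, hbval]; ring
    | succ N ih =>
      intro s hs hsα hgs hsδ
      set s' : ℝ := s / c with hs'def
      have hs'0 : 0 ≤ s' := div_nonneg hs (le_of_lt hc0)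
      have hcs' : c * s' = s := by
        rw [hs'def]; field_simp
      have hs'le : s' ≤ s := by
        rw [hs'def, div_le_iff₀ hc0]; nlinarith
      have hs'δ : s' ≤ δ * c ^ N := by
        rw [hs'def, div_le_iff₀ hc0]
        calc s ≤ δ * c ^ (N+1) := hsδ
        _ = δ * c ^ N * c := by ring
      have hg'le : g (η + s') - η ≤ α := by
        have h1 : η + s' ∈ Set.Icc η ζ := ⟨by linarith, by linarith⟩
        have h2 : η + s ∈ Set.Icc η ζ := ⟨by linarith, by linarith⟩
        have := hmono h1 h2 (by linarith)
        linarith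
      have hih := ih s' hs'0 (le_trans hs'le hsα) hg'le hs'δ
      have hk := key s' hs'0 (by rw [hcs']; exact hsα) hg'le
      rw [hcs'] at hk
      rw [hk, hih, ← hcs']
      ring
  refine ⟨a, η - a * η, ?_⟩
  intro t ht hgt
  obtain ⟨N, hN⟩ := pow_unbounded_of_one_lt (α / δ) hc
  have hαδ : α ≤ δ * c ^ N := by
    rw [div_lt_iff₀ hδ] at hN
    nlinarith
  have hs0 : 0 ≤ t - η := by linarith [ht.1]
  have hsα : t - η ≤ α := by linarith [ht.2]
  have hgs : g (η + (t - η)) - η ≤ α := by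
    have : η + (t - η) = t := by ring
    rw [this]; linarith [hgt.2]
  have := main N (t - η) hs0 hsα hgs (le_trans hsα hαδ)
  have heq : η + (t - η) = t := by ring
  rw [heq] at this
  rw [this]; ring
end

section
/- Let D be a finite directed graph and let c ∈ H¹(D, ℤ) be a cohomology class such that c(ℓ) ≥ 0 for every directed cycle ℓ in D. Then c can be represented by an integer 1-cochain that takes a non-negative value on each directed edge. -/
section BF
open scoped Classical

variable {V E : Type*} [Fintype V] [Fintype E] (src tgt : E → V) (α : E → ℤ)

/-- One Bellman–Ford relaxation step. -/
noncomputable def bfAux (g : V → ℤ) (v : V) : ℤ :=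
  Finset.univ.inf' Finset.univ_nonempty fun o : Option E =>
    o.elim (g v) fun e => if src e = v then α e + g (tgt e) else g v

/-- Bellman–Ford values: `bf k v` is the minimum weight of a walk of length ≤ k from v. -/
noncomputable def bf : ℕ → V → ℤ
  | 0 => fun _ => 0
  | (k + 1) => bfAux src tgt α (bf k)

lemma bf_succ (k : ℕ) (v : V) : bf src tgt α (k + 1) v = bfAux src tgt α (bf src tgt α k) v := rfl

lemma bf_succ_le (k : ℕ) (v : V) : bf src tgt α (k + 1) v ≤ bf src tgt α k v := by
  rw [bf_succ]
  unfold bfAux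
  exact Finset.inf'_le _ (Finset.mem_univ (none : Option E))

lemma bf_le_edge (k : ℕ) (e : E) :
    bf src tgt α (k + 1) (src e) ≤ α e + bf src tgt α k (tgt e) := by
  rw [bf_succ]
  unfold bfAux
  refine le_trans (Finset.inf'_le _ (Finset.mem_univ (some e))) ?_
  simp

lemma bf_nonpos (k : ℕ) (v : V) : bf src tgt α k v ≤ 0 := by
  induction k with
  | zero => exact le_refl 0
  | succ k ih => exact (bf_succ_le src tgt α k v).trans ih

/-- Any walk of length ≤ k starting from v has weight at least `bf k v`. -/
lemma bf_le_sum (l : List E) : ∀ (k : ℕ) (v : V),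
    l.IsChain (fun a b => tgt a = src b) → (∀ e ∈ l.head?, src e = v) →
    l.length ≤ k → bf src tgt α k v ≤ (l.map α).sum := by
  induction l with
  | nil => intro k v _ _ _; simpa using bf_nonpos src tgt α k v
  | cons e t ih =>
    intro k v hc hh hlen
    rcases k with _ | k
    · simp at hlen
    have hse : src e = v := hh e rfl
    rw [List.isChain_cons] at hc
    have h2 : bf src tgt α k (tgt e) ≤ (t.map α).sum :=
      ih k (tgt e) hc.2 (fun e' he' => (hc.1 e' he').symm)
        (by simp at hlen; omega)
    have h1 : bf src tgt α (k + 1) v ≤ α e + bf src tgt α k (tgt e) := by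
      rw [← hse]; exact bf_le_edge src tgt α k e
    simp only [List.map_cons, List.sum_cons]
    omega

/-- `bf k v` is realized by some walk of length ≤ k from v. -/
lemma bf_exists (k : ℕ) : ∀ v : V, ∃ l : List E,
    l.IsChain (fun a b => tgt a = src b) ∧ (∀ e ∈ l.head?, src e = v) ∧
    l.length ≤ k ∧ (l.map α).sum = bf src tgt α k v := by
  induction k with
  | zero => intro v; exact ⟨[], List.isChain_nil, by simp, by simp, rfl⟩
  | succ k ih =>
    intro v
    obtain ⟨o, -, ho⟩ := Finset.exists_mem_eq_inf' (Finset.univ_nonempty)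
      (fun o : Option E =>
        o.elim (bf src tgt α k v) fun e =>
          if src e = v then α e + bf src tgt α k (tgt e) else bf src tgt α k v)
    have hval : bf src tgt α (k + 1) v =
        o.elim (bf src tgt α k v) fun e =>
          if src e = v then α e + bf src tgt α k (tgt e) else bf src tgt α k v := ho
    match o with
    | none =>
      obtain ⟨l, hc, hh, hlen, hsum⟩ := ih v
      exact ⟨l, hc, hh, hlen.trans (Nat.le_succ k), by simpa using hsum.trans hval.symm⟩
    | some e =>
      simp only [Option.elim_some] at hval
      by_cases hse : src e = v
      · rw [if_pos hse] at hval
        obtain ⟨t, hc, hh, hlen, hsum⟩ := ih (tgt e)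
        refine ⟨e :: t, ?_, ?_, by simpa using hlen, ?_⟩
        · rw [List.isChain_cons]
          exact ⟨fun y hy => (hh y hy).symm, hc⟩
        · intro e' he'; simp at he'; rw [← he']; exact hse
        · simp only [List.map_cons, List.sum_cons, hsum, hval]
      · rw [if_neg hse] at hval
        obtain ⟨l, hc, hh, hlen, hsum⟩ := ih v
        exact ⟨l, hc, hh, hlen.trans (Nat.le_succ k), by rw [hsum, hval]⟩

/-- Cycle removal: if every directed cycle has non-negative weight, then every walk
(of any length) from v has weight at least `bf (card V) v`. -/
lemma bf_le_sum_all
    (hcyc : ∀ (n : ℕ) (e : Fin (n + 1) → E),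
        (∀ i : Fin (n + 1), tgt (e i) = src (e (i + 1))) →
        0 ≤ ∑ i, α (e i)) :
    ∀ (N : ℕ) (l : List E), l.length ≤ N → ∀ v : V,
      l.IsChain (fun a b => tgt a = src b) → (∀ e ∈ l.head?, src e = v) →
      bf src tgt α (Fintype.card V) v ≤ (l.map α).sum := by
  intro N
  induction N with
  | zero =>
    intro l hlen v hc hh
    exact bf_le_sum src tgt α l _ v hc hh (hlen.trans (Nat.zero_le _))
  | succ N ihN =>
    intro l hlen v hc hh
    by_cases hshort : l.length ≤ Fintype.card V
    · exact bf_le_sum src tgt α l _ v hc hh hshort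
    push_neg at hshort
    -- l is long: find a repeated vertex and splice out a cycle
    set len := l.length with hlendef
    have hne : l ≠ [] := by
      intro h
      rw [hlendef, h] at hshort
      simp at hshort
    have h0len : 0 < len := List.length_pos_iff.mpr hne
    -- vertex at position i along the walk
    set vtx : ℕ → V := fun i => if h : i < len then l[i]'(h) |> src else tgt (l.getLast hne)
      with hvtx
    have hvtx_lt : ∀ i (h : i < len), vtx i = src (l[i]'h) := by
      intro i h; simp only [hvtx, dif_pos h]
    have hvtx_succ : ∀ i (h : i < len), vtx (i + 1) = tgt (l[i]'h) := by
      intro i h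
      by_cases h' : i + 1 < len
      · rw [hvtx_lt (i + 1) h']
        have := List.isChain_iff_getElem.mp hc i (by omega)
        simpa using this.symm
      · have hi : l.length - 1 = i := by omega
        simp only [hvtx, dif_neg h']
        rw [List.getLast_eq_getElem]
        subst hi
        rfl
    have hv0 : vtx 0 = v := by
      rw [hvtx_lt 0 h0len]
      apply hh
      rw [List.head?_eq_head hne, List.head_eq_getElem]
      rfl
    -- pigeonhole
    have hcard : Fintype.card V < Fintype.card (Fin (len + 1)) := by
      simp only [Fintype.card_fin]; omega
    obtain ⟨i, j, hij, hgij⟩ :=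
      Fintype.exists_ne_map_eq_of_card_lt (fun i : Fin (len + 1) => vtx i.val) hcard
    -- wlog i < j
    obtain ⟨a, b, hab, hble, hvab⟩ : ∃ a b : ℕ, a < b ∧ b ≤ len ∧ vtx a = vtx b := by
      rcases lt_or_gt_of_ne (fun h : i.val = j.val => hij (Fin.ext h)) with h | h
      · exact ⟨i.val, j.val, h, by omega, hgij⟩
      · exact ⟨j.val, i.val, h, by omega, hgij.symm⟩
    -- the cycle l[a], l[a+1], ..., l[b-1]
    set m := b - a - 1 with hm
    have hidx : ∀ i : Fin (m + 1), a + i.val < len := by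
      intro i; have := i.isLt; omega
    set ce : Fin (m + 1) → E := fun i => l[a + i.val]'(hidx i) with hce
    have hcyc_sum : 0 ≤ ∑ i, α (ce i) := by
      apply hcyc m ce
      intro i
      by_cases hil : i = Fin.last m
      · have h1 : (i + 1).val = 0 := by
          rw [Fin.val_add_one, if_pos hil]
        have h2 : i.val = m := by rw [hil]; rfl
        simp only [hce, h1, h2, Nat.add_zero]
        have e1 : tgt (l[a + m]'(by omega)) = vtx (a + m + 1) :=
          (hvtx_succ (a + m) (by omega)).symm
        rw [e1, show a + m + 1 = b from by omega, ← hvab, hvtx_lt a (by omega)]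
      · have h1 : (i + 1).val = i.val + 1 := by
          rw [Fin.val_add_one, if_neg hil]
        simp only [hce, h1]
        have hlt : a + i.val + 1 < len := by
          have : i.val < m := Fin.lt_last_iff_ne_last.mpr hil
          omega
        have := List.isChain_iff_getElem.mp hc (a + i.val) (by omega)
        simpa [show a + (i.val + 1) = a + i.val + 1 from by omega] using this
    -- splice: l = take a ++ mid ++ drop b, with mid the cycle
    set mid := (l.drop a).take (b - a) with hmid
    set l' := l.take a ++ l.drop b with hl'
    have hdecomp : l.take a ++ (mid ++ l.drop b) = l := by
      rw [hmid]
      have : (l.drop a).drop (b - a) = l.drop b := by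
        rw [List.drop_drop]
        congr 1
        omega
      rw [← this, List.take_append_drop, List.take_append_drop]
    have hmidlen : mid.length = m + 1 := by
      simp only [hmid, List.length_take, List.length_drop]
      omega
    have hmidget : ∀ (i : ℕ) (h : i < mid.length), mid[i]'h = l[a + i]'(by
        simp only [hmidlen] at h; omega) := by
      intro i h
      simp only [hmid]
      rw [List.getElem_take, List.getElem_drop]
    -- weight of the cycle part
    have hmidsum : (mid.map α).sum = ∑ i, α (ce i) := by
      rw [← Fin.sum_univ_fun_getElem mid α, ← Fin.sum_congr' (fun i : Fin (m + 1) => α (ce i)) hmidlen]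
      apply Finset.sum_congr rfl
      intro i _
      congr 1
      exact hmidget i.val i.isLt
    -- the spliced walk l'
    have hl'len : l'.length ≤ N := by
      simp only [hl', List.length_append, List.length_take, List.length_drop]
      omega
    have hl'chain : l'.IsChain (fun a b => tgt a = src b) := by
      rw [hl', List.isChain_append]
      refine ⟨hc.infix (List.take_prefix a l).isInfix,
        hc.infix (List.drop_suffix b l).isInfix, ?_⟩
      intro x hx y hy
      -- y is l[b], so b < len
      have hbne : l.drop b ≠ [] := by
        intro h; rw [h] at hy; simp at hy
      have hblt : b < len := by
        have := List.length_pos_iff.mpr hbne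
        simp only [List.length_drop] at this
        omega
      have hy' : y = l[b]'hblt := by
        have : (l.drop b).head? = some ((l.drop b)[0]'(by
            simp only [List.length_drop]; omega)) := by
          rw [List.head?_eq_head, List.head_eq_getElem]
          intro h; exact hbne h
        rw [this] at hy
        simp only [Option.mem_some_iff] at hy
        rw [← hy]
        simp
      -- x is l[a-1], so a > 0
      have hane : l.take a ≠ [] := by
        intro h; rw [h] at hx; simp at hx
      have hapos : 0 < a := by
        rcases Nat.eq_zero_or_pos a with h | h
        · exfalso; apply hane; rw [h]; simp
        · exact h
      have hx' : x = l[a - 1]'(by omega) := by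
        have hlt : (l.take a).length - 1 < (l.take a).length := by
          have := List.length_pos_iff.mpr hane; omega
        have : (l.take a).getLast? = some ((l.take a)[(l.take a).length - 1]'hlt) := by
          rw [List.getLast?_eq_getLast hane, List.getLast_eq_getElem]
        rw [this] at hx
        simp only [Option.mem_some_iff] at hx
        have hta : (l.take a).length = a := by
          simp only [List.length_take]; omega
        rw [← hx]
        simp only [List.getElem_take]
        congr 1
        omega
      rw [hx', hy']
      have h1 : tgt (l[a - 1]'(by omega)) = vtx a := by
        have := hvtx_succ (a - 1) (by omega)
        rw [show a - 1 + 1 = a from by omega] at this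
        rw [this]
      rw [h1, hvab, hvtx_lt b hblt]
    have hl'head : ∀ e ∈ l'.head?, src e = v := by
      intro e he
      rcases Nat.eq_zero_or_pos a with ha0 | hapos
      · -- l' = drop b
        have hl'eq : l' = l.drop b := by rw [hl', ha0]; simp
        rw [hl'eq] at he
        have hbne : l.drop b ≠ [] := by
          intro h; rw [h] at he; simp at he
        have hblt : b < len := by
          have := List.length_pos_iff.mpr hbne
          simp only [List.length_drop] at this; omega
        have : (l.drop b).head? = some ((l.drop b)[0]'(by
            simp only [List.length_drop]; omega)) := by
          rw [List.head?_eq_head, List.head_eq_getElem]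
          intro h; exact hbne h
        rw [this] at he
        simp only [Option.mem_some_iff] at he
        rw [← he]
        have : (l.drop b)[0]'(by simp only [List.length_drop]; omega) = l[b]'hblt := by
          simp
        rw [this, ← hvtx_lt b hblt, ← hvab, ha0, hv0]
      · -- head of l' = head of l
        have htne : l.take a ≠ [] := by
          intro h
          have := congrArg List.length h
          simp only [List.length_take, List.length_nil] at this
          omega
        have hl'h : l'.head? = l.head? := by
          rw [hl', List.head?_append, List.head?_eq_head htne, List.head_take htne,
            Option.some_or, List.head?_eq_head hne]
        rw [hl'h] at he
        exact hh e he
    -- conclude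
    have hsum : (l.map α).sum = (l'.map α).sum + (mid.map α).sum := by
      conv_lhs => rw [← hdecomp]
      simp only [hl', List.map_append, List.sum_append]
      ring
    have := ihN l' hl'len v hl'chain hl'head
    rw [hsum, hmidsum]
    omega

end BF

/-- Positive cochain representative: if an integer 1-cochain α on a finite directed
graph (with edge set E, vertex set V, source and target maps src, tgt) has
non-negative sum along every directed cycle, then its cohomology class has a
representative (α plus a coboundary) that is non-negative on every directed edge. -/
theorem stmt19 {V E : Type*} [Fintype V] [Fintype E]
    (src tgt : E → V) (α : E → ℤ)
    (hcyc : ∀ (n : ℕ) (e : Fin (n + 1) → E),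
        (∀ i : Fin (n + 1), tgt (e i) = src (e (i + 1))) →
        0 ≤ ∑ i, α (e i)) :
    ∃ f : V → ℤ, ∀ ed : E, 0 ≤ α ed + (f (tgt ed) - f (src ed)) := by
  set n := Fintype.card V with hn
  refine ⟨bf src tgt α n, fun ed => ?_⟩
  -- get an optimal walk from tgt ed and prepend ed
  obtain ⟨t, hc, hh, hlen, hsum⟩ := bf_exists src tgt α n (tgt ed)
  have hwalk : bf src tgt α n (src ed) ≤ ((ed :: t).map α).sum := by
    apply bf_le_sum_all src tgt α hcyc (n + 1) (ed :: t) (by simpa using hlen) (src ed)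
    · rw [List.isChain_cons]
      exact ⟨fun y hy => (hh y hy).symm, hc⟩
    · intro e' he'; simp at he'; rw [he']
  simp only [List.map_cons, List.sum_cons, hsum] at hwalk
  omega
end
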